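/- arXiv:1409.5782 — 6 statements merged into one kernel-verified Lean document; each statement's English description precedes it below -/
import Mathlib

section
/- Let K ⊂ ℝⁿ be a convex body and T ⊂ ℝⁿ a convex body containing the origin in its interior. Then ξ_T(K − K) ≤ (n+1)·ξ_T(K), where K − K = {x − y : x, y ∈ K} is the difference body of K. -/
open scoped RealInnerProductSpace Pointwise
open MeasureTheory

/-- A convex body: compact, convex, with nonempty interior. -/
def IsConvexBody {n : ℕ} (K : Set (EuclideanSpace ℝ (Fin n))) : Prop :=
  IsCompact K ∧ Convex ℝ K ∧ (interior K).Nonempty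

/-- The (possibly non-symmetric) norm with unit ball `T°`: `‖v‖_T = max_{p ∈ T} ⟨p, v⟩`. -/
noncomputable def suppNorm {n : ℕ} (T : Set (EuclideanSpace ℝ (Fin n)))
    (v : EuclideanSpace ℝ (Fin n)) : ℝ :=
  sSup ((fun p => ⟪p, v⟫) '' T)

/-- The vertex set `q 0, …, q (m-1)` cannot be translated into the interior of `K`. -/
def NotTranslatableInto {n : ℕ} (m : ℕ) (q : ℕ → EuclideanSpace ℝ (Fin n))
    (K : Set (EuclideanSpace ℝ (Fin n))) : Prop :=
  ∀ t : EuclideanSpace ℝ (Fin n), ∃ i < m, q i + t ∉ interior K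

/-- `ξ_T(K)`: the length of the shortest closed billiard trajectory in `K` with geometry
given by `T`, characterized à la Bezdek–Bezdek as the infimum of `ℓ_T`-lengths of closed
polygonal lines whose vertex set cannot be translated into the interior of `K`. -/
noncomputable def xi {n : ℕ} (T K : Set (EuclideanSpace ℝ (Fin n))) : ℝ :=
  sInf {ℓ : ℝ | ∃ m : ℕ, 2 ≤ m ∧ ∃ q : ℕ → EuclideanSpace ℝ (Fin n),
    NotTranslatableInto m q K ∧
    ℓ = ∑ i ∈ Finset.range m, suppNorm T (q ((i + 1) % m) - q i)}

/-- `ξ_B(K)`: the Euclidean version of `xi`. -/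
noncomputable def xiB {n : ℕ} (K : Set (EuclideanSpace ℝ (Fin n))) : ℝ :=
  sInf {ℓ : ℝ | ∃ m : ℕ, 2 ≤ m ∧ ∃ q : ℕ → EuclideanSpace ℝ (Fin n),
    NotTranslatableInto m q K ∧
    ℓ = ∑ i ∈ Finset.range m, ‖q ((i + 1) % m) - q i‖}

/-- The Euclidean width of `K`: the minimum over unit directions of the breadth. -/
noncomputable def widthB {n : ℕ} (K : Set (EuclideanSpace ℝ (Fin n))) : ℝ :=
  sInf {w : ℝ | ∃ p : EuclideanSpace ℝ (Fin n), ‖p‖ = 1 ∧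
    w = sSup ((fun q => ⟪p, q⟫) '' K) - sInf ((fun q => ⟪p, q⟫) '' K)}

/-- The polar body `K° = {p : ⟨p, q⟩ ≤ 1 ∀ q ∈ K}`. -/
def polarBody {n : ℕ} (K : Set (EuclideanSpace ℝ (Fin n))) :
    Set (EuclideanSpace ℝ (Fin n)) :=
  {p | ∀ q ∈ K, ⟪p, q⟫ ≤ 1}

namespace XiAux


variable {n : ℕ}

def traj (T A : Set (EuclideanSpace ℝ (Fin n))) : Set ℝ :=
  {ℓ : ℝ | ∃ m : ℕ, 2 ≤ m ∧ ∃ q : ℕ → EuclideanSpace ℝ (Fin n),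
    NotTranslatableInto m q A ∧
    ℓ = ∑ i ∈ Finset.range m, suppNorm T (q ((i + 1) % m) - q i)}

lemma xi_eq (T A : Set (EuclideanSpace ℝ (Fin n))) : xi T A = sInf (traj T A) := rfl

lemma suppNorm_nonneg {T : Set (EuclideanSpace ℝ (Fin n))} (hTc : IsCompact T)
    (h0 : (0 : EuclideanSpace ℝ (Fin n)) ∈ T) (v : EuclideanSpace ℝ (Fin n)) :
    0 ≤ suppNorm T v := by
  have hb : BddAbove ((fun p => ⟪p, v⟫) '' T) :=
    (hTc.image (continuous_id.inner continuous_const)).bddAbove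
  have h : ⟪(0 : EuclideanSpace ℝ (Fin n)), v⟫ ≤ suppNorm T v :=
    le_csSup hb ⟨0, h0, rfl⟩
  simpa using h

lemma suppNorm_smul (T : Set (EuclideanSpace ℝ (Fin n))) {c : ℝ} (hc : 0 ≤ c)
    (v : EuclideanSpace ℝ (Fin n)) : suppNorm T (c • v) = c * suppNorm T v := by
  have himg : (fun p => ⟪p, c • v⟫) '' T = c • ((fun p => ⟪p, v⟫) '' T) := by
    rw [← Set.image_smul, ← Set.image_comp]
    refine Set.image_congr fun p _ => ?_
    simp only [Function.comp_apply, smul_eq_mul]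
    exact real_inner_smul_right p v c
  unfold suppNorm
  rw [himg, Real.sSup_smul_of_nonneg hc, smul_eq_mul]

lemma traj_bddBelow {T : Set (EuclideanSpace ℝ (Fin n))} (hTc : IsCompact T)
    (h0 : (0 : EuclideanSpace ℝ (Fin n)) ∈ T) (A : Set (EuclideanSpace ℝ (Fin n))) :
    BddBelow (traj T A) := by
  refine ⟨0, fun ℓ hℓ => ?_⟩
  obtain ⟨m, _, q, _, rfl⟩ := hℓ
  exact Finset.sum_nonneg fun i _ => suppNorm_nonneg hTc h0 _

lemma traj_nonempty (hn : 0 < n) (T : Set (EuclideanSpace ℝ (Fin n)))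
    {A : Set (EuclideanSpace ℝ (Fin n))} (hA : Bornology.IsBounded A) :
    (traj T A).Nonempty := by
  obtain ⟨R, hR⟩ := hA.subset_ball (0 : EuclideanSpace ℝ (Fin n))
  set w : EuclideanSpace ℝ (Fin n) :=
    (2 * |R| + 1) • EuclideanSpace.single ⟨0, hn⟩ (1 : ℝ) with hw
  have hwnorm : ‖w‖ = 2 * |R| + 1 := by
    rw [hw, norm_smul, EuclideanSpace.norm_single]
    simp [abs_of_nonneg (by positivity : (0:ℝ) ≤ 2 * |R| + 1)]
  refine ⟨_, 2, le_refl 2, (fun i => if i = 0 then 0 else w), ?_, rfl⟩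
  intro t
  by_contra h
  push_neg at h
  have h0 := h 0 (by norm_num)
  have h1 := h 1 (by norm_num)
  simp only [if_pos rfl] at h0
  simp only [if_neg (by norm_num : (1:ℕ) ≠ 0)] at h1
  have m0 : (0 : EuclideanSpace ℝ (Fin n)) + t ∈ Metric.ball (0:EuclideanSpace ℝ (Fin n)) R :=
    hR (interior_subset h0)
  have m1 : w + t ∈ Metric.ball (0:EuclideanSpace ℝ (Fin n)) R := hR (interior_subset h1)
  rw [mem_ball_zero_iff] at m1
  have m0' : ‖t‖ < R := by simpa [mem_ball_zero_iff] using m0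
  have : ‖w‖ ≤ ‖w + t‖ + ‖t‖ := by
    have := norm_add_le (w + t) (-t)
    simpa using this
  have hRle : R ≤ |R| := le_abs_self R
  nlinarith [abs_nonneg R]

lemma traj_anti {A B : Set (EuclideanSpace ℝ (Fin n))} (hAB : A ⊆ B)
    (T : Set (EuclideanSpace ℝ (Fin n))) : traj T B ⊆ traj T A := by
  rintro ℓ ⟨m, hm, q, hq, rfl⟩
  refine ⟨m, hm, q, fun t => ?_, rfl⟩
  obtain ⟨i, him, hi⟩ := hq t
  exact ⟨i, him, fun hin => hi (interior_mono hAB hin)⟩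

lemma not_translatable_add_singleton {A : Set (EuclideanSpace ℝ (Fin n))}
    (v : EuclideanSpace ℝ (Fin n)) (m : ℕ) (q : ℕ → EuclideanSpace ℝ (Fin n)) :
    NotTranslatableInto m q (A + {v}) ↔ NotTranslatableInto m q A := by
  have hint : interior (A + {v}) = (fun x => x + v) '' interior A := by
    simpa [Set.add_singleton] using ((Homeomorph.addRight v).image_interior A).symm
  constructor
  · intro hq t
    obtain ⟨i, him, hi⟩ := hq (t + v)
    refine ⟨i, him, fun hmem => hi ?_⟩
    rw [hint]
    exact ⟨q i + t, hmem, by abel⟩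
  · intro hq t
    obtain ⟨i, him, hi⟩ := hq (t - v)
    refine ⟨i, him, fun hmem => hi ?_⟩
    rw [hint] at hmem
    obtain ⟨z, hz, hzeq⟩ := hmem
    have hz2 : z + v = q i + t := hzeq
    have hz3 : z = q i + (t - v) := by
      have := eq_sub_of_add_eq hz2
      rw [this, add_sub_assoc]
    rwa [← hz3]

lemma traj_translate (T A : Set (EuclideanSpace ℝ (Fin n))) (v : EuclideanSpace ℝ (Fin n)) :
    traj T (A + {v}) = traj T A := by
  ext ℓ
  simp only [traj, Set.mem_setOf_eq, not_translatable_add_singleton]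

lemma traj_smul_subset (T : Set (EuclideanSpace ℝ (Fin n)))
    {K : Set (EuclideanSpace ℝ (Fin n))} {c : ℝ} (hc : 0 < c) :
    c • traj T K ⊆ traj T (c • K) := by
  rintro x ⟨ℓ, ⟨m, hm, q, hq, rfl⟩, rfl⟩
  refine ⟨m, hm, fun i => c • q i, ?_, ?_⟩
  · intro t
    obtain ⟨i, him, hi⟩ := hq (c⁻¹ • t)
    refine ⟨i, him, fun hmem => hi ?_⟩
    rw [interior_smul₀ hc.ne' _] at hmem
    obtain ⟨z, hz, hzeq⟩ := hmem
    have hz' : z = q i + c⁻¹ • t := by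
      have := congrArg (fun u => c⁻¹ • u) hzeq
      simpa [smul_smul, inv_mul_cancel₀ hc.ne', smul_add] using this
    rwa [← hz']
  · show c • (∑ i ∈ Finset.range m, suppNorm T (q ((i + 1) % m) - q i)) = _
    rw [smul_eq_mul, Finset.mul_sum]
    exact Finset.sum_congr rfl fun i _ => by
      simp only [← smul_sub, suppNorm_smul T hc.le]

end XiAux

open Finset Module in

lemma exists_helly_point {n : ℕ} (hn : 0 < n) {K : Set (EuclideanSpace ℝ (Fin n))}
    (hKc : IsCompact K) (hKv : Convex ℝ K) (hKne : K.Nonempty) :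
    ∃ p : EuclideanSpace ℝ (Fin n), ∀ x ∈ K, ∃ y ∈ K,
      ((n : ℝ) + 1) • p = (n : ℝ) • y + x := by
  classical
  have hn1 : ((n : ℝ) + 1) ≠ 0 := by positivity
  have hnR : (n : ℝ) ≠ 0 := Nat.cast_ne_zero.mpr hn.ne'
  set G : EuclideanSpace ℝ (Fin n) → Set (EuclideanSpace ℝ (Fin n)) :=
    fun x => ((n : ℝ) / ((n : ℝ) + 1)) • K + {(((n : ℝ) + 1)⁻¹) • x} with hG
  have hmemG : ∀ x p : EuclideanSpace ℝ (Fin n),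
      p ∈ G x ↔ ∃ y ∈ K, ((n:ℝ)/((n:ℝ)+1)) • y + (((n:ℝ)+1)⁻¹) • x = p := by
    intro x p
    rw [hG]
    simp only [Set.add_singleton, Set.mem_image, Set.mem_smul_set]
    constructor
    · rintro ⟨z, ⟨y, hy, rfl⟩, rfl⟩; exact ⟨y, hy, rfl⟩
    · rintro ⟨y, hy, h⟩; exact ⟨_, ⟨y, hy, rfl⟩, h⟩
  have key : (⋂ x : K, G ↑x).Nonempty := by
    apply Convex.helly_theorem_compact' (𝕜 := ℝ)
    · intro x
      exact (hKv.smul _).add (convex_singleton _)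
    · intro x
      exact ((hKc.smul _).add isCompact_singleton)
    · intro I hIcard
      rcases I.eq_empty_or_nonempty with rfl | ⟨x₀, hx₀⟩
      · simp
      rw [finrank_euclideanSpace_fin] at hIcard
      set k := #I with hk
      have hk1 : 1 ≤ k := Finset.card_pos.mpr ⟨x₀, hx₀⟩
      set c₀ : ℝ := ((n + 1 - k : ℕ) : ℝ) with hc₀
      have hc₀' : c₀ = (n : ℝ) + 1 - (k : ℝ) := by
        rw [hc₀, Nat.cast_sub hIcard]; push_cast; ring
      set c : EuclideanSpace ℝ (Fin n) :=
        (((n : ℝ) + 1)⁻¹) • ((∑ x ∈ I, (x : EuclideanSpace ℝ (Fin n))) + c₀ • (x₀ : EuclideanSpace ℝ (Fin n))) with hc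
      refine ⟨c, ?_⟩
      rw [Set.mem_iInter₂]
      intro x hx
      rw [hmemG]
      set w : K → ℝ := fun x' =>
        (n : ℝ)⁻¹ * ((if x' = x then 0 else 1) + (if x' = x₀ then c₀ else 0)) with hwdef
      have hwnonneg : ∀ x' ∈ I, 0 ≤ w x' := by
        intro x' _
        rw [hwdef]
        have h1 : (0:ℝ) ≤ (if x' = x then (0:ℝ) else 1) := by split <;> norm_num
        have h2 : (0:ℝ) ≤ (if x' = x₀ then c₀ else 0) := by
          split
          · rw [hc₀]; positivity
          · exact le_refl 0
        positivity
      have hsum1 : ∑ x' ∈ I, (if x' = x then (0:ℝ) else 1) = (k : ℝ) - 1 := by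
        have : ∀ x' ∈ I, (if x' = x then (0:ℝ) else 1) = 1 - (if x' = x then (1:ℝ) else 0) := by
          intro x' _; split <;> norm_num
        rw [Finset.sum_congr rfl this, Finset.sum_sub_distrib, Finset.sum_const,
          Finset.sum_ite_eq' I x (fun _ => (1:ℝ)), if_pos hx]
        simp [hk]
      have hsum2 : ∑ x' ∈ I, (if x' = x₀ then c₀ else 0) = c₀ := by
        rw [Finset.sum_ite_eq' I x₀ (fun _ => c₀), if_pos hx₀]
      have hwsum : ∑ x' ∈ I, w x' = 1 := by
        rw [hwdef]
        rw [← Finset.mul_sum, Finset.sum_add_distrib, hsum1, hsum2, hc₀']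
        field_simp
        ring
      set y : EuclideanSpace ℝ (Fin n) := ∑ x' ∈ I, w x' • (x' : EuclideanSpace ℝ (Fin n)) with hy
      have hyK : y ∈ K := hKv.sum_mem hwnonneg hwsum (fun x' _ => x'.2)
      refine ⟨y, hyK, ?_⟩
      have hny : (n : ℝ) • y = (∑ x' ∈ I, (x' : EuclideanSpace ℝ (Fin n)))
          - (x : EuclideanSpace ℝ (Fin n)) + c₀ • (x₀ : EuclideanSpace ℝ (Fin n)) := by
        rw [hy, Finset.smul_sum]
        have hterm : ∀ x' ∈ I, (n : ℝ) • (w x' • (x' : EuclideanSpace ℝ (Fin n)))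
            = ((x' : EuclideanSpace ℝ (Fin n)) - (if x' = x then (x' : EuclideanSpace ℝ (Fin n)) else 0))
              + (if x' = x₀ then c₀ • (x' : EuclideanSpace ℝ (Fin n)) else 0) := by
          intro x' _
          rw [hwdef, smul_smul, ← mul_assoc, mul_inv_cancel₀ hnR, one_mul, add_smul]
          congr 1
          · split <;> simp
          · split <;> simp
        rw [Finset.sum_congr rfl hterm, Finset.sum_add_distrib, Finset.sum_sub_distrib,
          Finset.sum_ite_eq' I x (fun x' => (x' : EuclideanSpace ℝ (Fin n))), if_pos hx]
        congr 1
        rw [show (fun x' : K => if x' = x₀ then c₀ • (x' : EuclideanSpace ℝ (Fin n)) else 0)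
            = (fun x' : K => if x' = x₀ then c₀ • (x₀ : EuclideanSpace ℝ (Fin n)) else 0) from
          funext fun x' => by split <;> simp_all]
        rw [Finset.sum_ite_eq' I x₀ (fun _ => c₀ • (x₀ : EuclideanSpace ℝ (Fin n))), if_pos hx₀]
      have hsmul : ((n:ℝ)/((n:ℝ)+1)) • y = (((n:ℝ)+1)⁻¹) • ((n:ℝ) • y) := by
        rw [smul_smul]; congr 1; field_simp
      rw [hsmul, hny, hc, ← smul_add]
      congr 1
      abel
  obtain ⟨p, hp⟩ := key
  refine ⟨p, fun x hx => ?_⟩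
  have := Set.mem_iInter.mp hp ⟨x, hx⟩
  rw [hmemG] at this
  obtain ⟨y, hy, heq⟩ := this
  refine ⟨y, hy, ?_⟩
  have := congrArg (fun u => ((n:ℝ)+1) • u) heq
  simp only [smul_add, smul_smul] at this
  rw [mul_div_cancel₀ _ hn1, mul_inv_cancel₀ hn1, one_smul] at this
  exact this.symm

/-- Rogers–Shepard type inequality for shortest billiard trajectories:
`ξ_T(K − K) ≤ (n+1)·ξ_T(K)`. -/

theorem xi_diff_le (n : ℕ) (K T : Set (EuclideanSpace ℝ (Fin n)))
    (hK : IsConvexBody K) (hT : IsConvexBody T)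
    (hT0 : (0 : EuclideanSpace ℝ (Fin n)) ∈ interior T) :
    xi T (K - K) ≤ ((n : ℝ) + 1) * xi T K := by
  obtain ⟨hKc, hKv, hKi⟩ := hK
  obtain ⟨hTc, -, -⟩ := hT
  have hT0' : (0 : EuclideanSpace ℝ (Fin n)) ∈ T := interior_subset hT0
  have hKne : K.Nonempty := hKi.mono interior_subset
  rcases Nat.eq_zero_or_pos n with hn | hn
  · subst hn
    haveI : Subsingleton (EuclideanSpace ℝ (Fin 0)) :=
      ⟨fun a b => PiLp.ext fun i => i.elim0⟩
    have hempty : ∀ A : Set (EuclideanSpace ℝ (Fin 0)), A.Nonempty →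
        XiAux.traj T A = ∅ := by
      intro A hA
      rw [Set.eq_empty_iff_forall_notMem]
      rintro ℓ ⟨m, hm, q, hq, rfl⟩
      obtain ⟨i, _, hi⟩ := hq 0
      apply hi
      have hAuniv : A = Set.univ := Set.eq_univ_of_forall fun z => by
        obtain ⟨a, ha⟩ := hA; rwa [Subsingleton.elim z a]
      rw [hAuniv, interior_univ]; trivial
    have hKKne : (K - K).Nonempty :=
      ⟨_, Set.sub_mem_sub hKne.some_mem hKne.some_mem⟩
    rw [XiAux.xi_eq, XiAux.xi_eq, hempty K hKne, hempty _ hKKne, Real.sInf_empty]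
    norm_num
  · obtain ⟨p, hp⟩ := exists_helly_point hn hKc hKv hKne
    set c : ℝ := (n : ℝ) + 1 with hcdef
    have hc : 0 < c := by positivity
    set v : EuclideanSpace ℝ (Fin n) := -(c • p) with hv
    have hsub : K - K ⊆ c • K + {v} := by
      rintro z hz
      rw [Set.mem_sub] at hz
      obtain ⟨a, ha, b, hb, rfl⟩ := hz
      obtain ⟨y, hy, hyeq⟩ := hp b hb
      have hsum1 : c⁻¹ + (n : ℝ) * c⁻¹ = 1 := by
        rw [hcdef]
        have h1 : ((n : ℝ) + 1) ≠ 0 := by positivity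
        field_simp
        ring
      have hu : c⁻¹ • a + ((n : ℝ) * c⁻¹) • y ∈ K :=
        hKv ha hy (by positivity) (by positivity) hsum1
      rw [Set.add_singleton]
      refine ⟨c • (c⁻¹ • a + ((n : ℝ) * c⁻¹) • y), Set.smul_mem_smul_set hu, ?_⟩
      have hcs : c • (c⁻¹ • a + ((n : ℝ) * c⁻¹) • y) = a + (n : ℝ) • y := by
        rw [smul_add, smul_smul, smul_smul, mul_inv_cancel₀ hc.ne', one_smul]
        congr 1
        rw [mul_comm (n : ℝ) c⁻¹, ← mul_assoc, mul_inv_cancel₀ hc.ne', one_mul]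
      rw [hcs, hv, ← hcdef] at *
      rw [hyeq]
      abel
    have hcompact : IsCompact (c • K + {v}) := (hKc.smul c).add isCompact_singleton
    have h1 : xi T (K - K) ≤ sInf (XiAux.traj T (c • K + {v})) := by
      rw [XiAux.xi_eq]
      exact csInf_le_csInf (XiAux.traj_bddBelow hTc hT0' _)
        (XiAux.traj_nonempty hn T hcompact.isBounded)
        (XiAux.traj_anti hsub T)
    rw [XiAux.traj_translate] at h1
    have h2 : sInf (XiAux.traj T (c • K)) ≤ c * sInf (XiAux.traj T K) := by
      have h3 := csInf_le_csInf (XiAux.traj_bddBelow hTc hT0' (c • K))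
        ((XiAux.traj_nonempty hn T hKc.isBounded).smul_set (a := c))
        (XiAux.traj_smul_subset T hc)
      rwa [Real.sInf_smul_of_nonneg hc.le, smul_eq_mul] at h3
    calc xi T (K - K) ≤ sInf (XiAux.traj T (c • K)) := h1
      _ ≤ c * sInf (XiAux.traj T K) := h2
      _ = ((n : ℝ) + 1) * xi T K := by rw [XiAux.xi_eq]
end

section
/- For every convex body K ⊂ ℝ², ξ_B(K) ≥ √3 · w_B(K), where w_B(K) denotes the Euclidean width of K. -/
open scoped RealInnerProductSpace Pointwise
open MeasureTheory

/-! ### Auxiliary lemmas -/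

section Poly

private lemma polyA' {x y z : ℝ} (hy : 0 ≤ y) (hz : 0 ≤ z) (hyx : y ≤ x) (hzx : z ≤ x) :
    (x+z)^2*x + (y+z)^2*y + (y+z)*(x+z)*(x+y-z) ≤ 4/3*x*(x+y+z)^2 := by
  have hx : 0 ≤ x := le_trans hy hyx
  nlinarith [mul_nonneg hz (sq_nonneg (y-z)), mul_nonneg (mul_nonneg hy (sub_nonneg.2 hzx)) (sub_nonneg.2 hzx), mul_nonneg (mul_nonneg hx hy) (sub_nonneg.2 hyx), mul_nonneg (mul_nonneg hz hz) (sub_nonneg.2 hyx), mul_nonneg (mul_nonneg hy hz) (sub_nonneg.2 hyx), mul_nonneg (mul_nonneg hy hy) (sub_nonneg.2 hyx), mul_nonneg hx (sq_nonneg (x-z)), mul_nonneg hz (sq_nonneg (x-z))]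

private lemma polyC' {x y z : ℝ} (hy : 0 ≤ y) (hz : 0 ≤ z) (hyx : y ≤ x) (hzx : z ≤ x) :
    (y+x)^2*y + (z+x)^2*z + (z+x)*(y+x)*(y+z-x) ≤ 4/3*x*(x+y+z)^2 := by
  have hx : 0 ≤ x := le_trans hy hyx
  nlinarith [mul_nonneg (mul_nonneg hx (sub_nonneg.2 hyx)) (sub_nonneg.2 hzx), mul_nonneg (mul_nonneg hy hz) (sub_nonneg.2 hzx), mul_nonneg (mul_nonneg hy hy) (sub_nonneg.2 hzx), mul_nonneg (mul_nonneg hx hx) (sub_nonneg.2 hyx), mul_nonneg (mul_nonneg hx hz) (sub_nonneg.2 hzx), mul_nonneg (mul_nonneg hx hy) (sub_nonneg.2 hyx), mul_nonneg (mul_nonneg hz hz) (sub_nonneg.2 hzx), mul_nonneg (mul_nonneg hy hy) (sub_nonneg.2 hyx), mul_nonneg (mul_nonneg hx hx) (sub_nonneg.2 hzx)]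

end Poly

section InnerSpace

variable {E : Type*} [NormedAddCommGroup E] [InnerProductSpace ℝ E]

private lemma normsq_comb' (r s : ℝ) (p q : E) :
    ‖r • p - s • q‖^2 = r^2*‖p‖^2 + s^2*‖q‖^2 - 2*r*s*⟪p,q⟫ := by
  rw [norm_sub_sq_real, norm_smul, norm_smul, real_inner_smul_left, real_inner_smul_right]
  simp only [mul_pow, sq_abs, Real.norm_eq_abs]
  ring

set_option maxHeartbeats 1000000 in
private lemma coreB' (u1 u2 u3 a b c : E) (hsum : u1 + u2 + u3 = 0)
    (h2 : ‖u2‖ ≤ ‖u1‖) (h3 : ‖u3‖ ≤ ‖u1‖) :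
    Real.sqrt 3 * (⟪u1,a⟫ + ⟪u2,b⟫ + ⟪u3,c⟫)
      ≤ ‖u1‖ * (dist a b + dist b c + dist c a) := by
  rcases eq_or_ne u1 0 with h1 | h1
  · have e2 : u2 = 0 := norm_le_zero_iff.1 (by simpa [h1] using h2)
    have e3 : u3 = 0 := norm_le_zero_iff.1 (by simpa [h1] using h3)
    simp [h1, e2, e3]
  set x := ‖u1‖^2 with hxdef
  set y := ‖u2‖^2 with hydef
  set z := ‖u3‖^2 with hzdef
  have hx : 0 < x := pow_pos (norm_pos_iff.2 h1) 2
  have hy : 0 ≤ y := sq_nonneg _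
  have hz : 0 ≤ z := sq_nonneg _
  have hyx : y ≤ x := by
    have := pow_le_pow_left₀ (norm_nonneg u2) h2 2
    simpa [hxdef, hydef] using this
  have hzx : z ≤ x := by
    have := pow_le_pow_left₀ (norm_nonneg u3) h3 2
    simpa [hxdef, hzdef] using this
  have hT : (0:ℝ) < x + y + z := by positivity
  set α : ℝ := (y+z)/(2*(x+y+z)) with hα
  set β : ℝ := (x+z)/(2*(x+y+z)) with hβ
  set γ : ℝ := (x+y)/(2*(x+y+z)) with hγ
  have hαβγ : α + β + γ = 1 := by
    rw [hα, hβ, hγ]; field_simp; ring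
  have i12 : ⟪u1,u2⟫ = (z - x - y)/2 := by
    have h : u1 + u2 = -u3 := by
      have h := hsum; rwa [add_eq_zero_iff_eq_neg] at h
    have hsq : ‖u1 + u2‖^2 = ‖u3‖^2 := by rw [h, norm_neg]
    rw [norm_add_sq_real] at hsq
    simp only [← hxdef, ← hydef, ← hzdef] at hsq
    linarith
  have i13 : ⟪u1,u3⟫ = (y - x - z)/2 := by
    have h : u1 + u3 = -u2 := by
      have h : u1 + u3 + u2 = 0 := by rw [← hsum]; abel
      rwa [add_eq_zero_iff_eq_neg] at h
    have hsq : ‖u1 + u3‖^2 = ‖u2‖^2 := by rw [h, norm_neg]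
    rw [norm_add_sq_real] at hsq
    simp only [← hxdef, ← hydef, ← hzdef] at hsq
    linarith
  have i23 : ⟪u2,u3⟫ = (x - y - z)/2 := by
    have h : u2 + u3 = -u1 := by
      have h : u2 + u3 + u1 = 0 := by rw [← hsum]; abel
      rwa [add_eq_zero_iff_eq_neg] at h
    have hsq : ‖u2 + u3‖^2 = ‖u1‖^2 := by rw [h, norm_neg]
    rw [norm_add_sq_real] at hsq
    simp only [← hxdef, ← hydef, ← hzdef] at hsq
    linarith
  set v12 : E := β • u1 - α • u2 with hv12
  set v13 : E := γ • u1 - α • u3 with hv13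
  set v23 : E := γ • u2 - β • u3 with hv23
  have hid : ⟪u1,a⟫ + ⟪u2,b⟫ + ⟪u3,c⟫
      = ⟪v12, a-b⟫ + ⟪v13, a-c⟫ + ⟪v23, b-c⟫ := by
    have hu3 : u3 = -u1 - u2 := by
      have h : u3 + (u1 + u2) = 0 := by rw [← hsum]; abel
      rw [add_eq_zero_iff_eq_neg] at h
      rw [h]; abel
    subst hu3
    simp only [hv12, hv13, hv23, inner_sub_left, inner_sub_right, inner_add_left,
      inner_neg_left, real_inner_smul_left]
    have hγ' : γ = 1 - α - β := by linarith
    rw [hγ']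
    ring
  have hb12 : ‖v12‖^2 ≤ x/3 := by
    have hn : ‖v12‖^2 = β^2*x + α^2*y - 2*β*α*⟪u1,u2⟫ := normsq_comb' β α u1 u2
    rw [i12, hα, hβ] at hn
    have key := polyA' hy hz hyx hzx
    have heq : ((x+z)/(2*(x+y+z)))^2*x + ((y+z)/(2*(x+y+z)))^2*y
        - 2*((x+z)/(2*(x+y+z)))*((y+z)/(2*(x+y+z)))*((z-x-y)/2)
        = ((x+z)^2*x + (y+z)^2*y + (y+z)*(x+z)*(x+y-z))/(4*(x+y+z)^2) := by
      field_simp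
      ring
    rw [hn, heq, div_le_iff₀ (by positivity)]
    ring_nf at key ⊢
    linarith [key]
  have hb13 : ‖v13‖^2 ≤ x/3 := by
    have hn : ‖v13‖^2 = γ^2*x + α^2*z - 2*γ*α*⟪u1,u3⟫ := normsq_comb' γ α u1 u3
    rw [i13, hα, hγ] at hn
    have key := polyA' hz hy hzx hyx
    have heq : ((x+y)/(2*(x+y+z)))^2*x + ((y+z)/(2*(x+y+z)))^2*z
        - 2*((x+y)/(2*(x+y+z)))*((y+z)/(2*(x+y+z)))*((y-x-z)/2)
        = ((x+y)^2*x + (z+y)^2*z + (z+y)*(x+y)*(x+z-y))/(4*(x+y+z)^2) := by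
      field_simp
      ring
    rw [hn, heq, div_le_iff₀ (by positivity)]
    ring_nf at key ⊢
    linarith [key]
  have hb23 : ‖v23‖^2 ≤ x/3 := by
    have hn : ‖v23‖^2 = γ^2*y + β^2*z - 2*γ*β*⟪u2,u3⟫ := normsq_comb' γ β u2 u3
    rw [i23, hβ, hγ] at hn
    have key := polyC' hy hz hyx hzx
    have heq : ((x+y)/(2*(x+y+z)))^2*y + ((x+z)/(2*(x+y+z)))^2*z
        - 2*((x+y)/(2*(x+y+z)))*((x+z)/(2*(x+y+z)))*((x-y-z)/2)
        = ((y+x)^2*y + (z+x)^2*z + (z+x)*(y+x)*(y+z-x))/(4*(x+y+z)^2) := by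
      field_simp
      ring
    rw [hn, heq, div_le_iff₀ (by positivity)]
    ring_nf at key ⊢
    linarith [key]
  have hs3 : (0:ℝ) ≤ Real.sqrt 3 := Real.sqrt_nonneg 3
  have sqrt_bound : ∀ v : E, ‖v‖^2 ≤ x/3 → Real.sqrt 3 * ‖v‖ ≤ ‖u1‖ := by
    intro v hv
    have h1' : (Real.sqrt 3 * ‖v‖)^2 ≤ ‖u1‖^2 := by
      rw [mul_pow, Real.sq_sqrt (by norm_num : (3:ℝ) ≥ 0)]
      rw [← hxdef]
      linarith
    have := Real.sqrt_le_sqrt h1'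
    rwa [Real.sqrt_sq (by positivity), Real.sqrt_sq (norm_nonneg _)] at this
  have s12 := sqrt_bound v12 hb12
  have s13 := sqrt_bound v13 hb13
  have s23 := sqrt_bound v23 hb23
  have term : ∀ (v w1 w2 : E), Real.sqrt 3 * ‖v‖ ≤ ‖u1‖ →
      Real.sqrt 3 * ⟪v, w1 - w2⟫ ≤ ‖u1‖ * dist w1 w2 := by
    intro v w1 w2 hs
    calc Real.sqrt 3 * ⟪v, w1 - w2⟫ ≤ Real.sqrt 3 * (‖v‖ * ‖w1 - w2‖) :=
          mul_le_mul_of_nonneg_left (real_inner_le_norm v _) hs3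
      _ = (Real.sqrt 3 * ‖v‖) * ‖w1 - w2‖ := by ring
      _ ≤ ‖u1‖ * ‖w1 - w2‖ := mul_le_mul_of_nonneg_right hs (norm_nonneg _)
      _ = ‖u1‖ * dist w1 w2 := by rw [dist_eq_norm]
  have t12 := term v12 a b s12
  have t13 := term v13 a c s13
  have t23 := term v23 b c s23
  have hdca : dist a c = dist c a := dist_comm a c
  calc Real.sqrt 3 * (⟪u1,a⟫ + ⟪u2,b⟫ + ⟪u3,c⟫)
      = Real.sqrt 3 * ⟪v12, a-b⟫ + Real.sqrt 3 * ⟪v13, a-c⟫ + Real.sqrt 3 * ⟪v23, b-c⟫ := by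
        rw [hid]; ring
    _ ≤ ‖u1‖ * dist a b + ‖u1‖ * dist a c + ‖u1‖ * dist b c := by linarith
    _ = ‖u1‖ * (dist a b + dist b c + dist c a) := by rw [← hdca]; ring

private lemma subset_closure_interior' {K : Set E} (hKc : Convex ℝ K)
    (hKi : (interior K).Nonempty) : K ⊆ closure (interior K) := by
  intro w hw
  obtain ⟨x0, hx0⟩ := hKi
  have hmem : ∀ n : ℕ, w + (1/(n+1) : ℝ) • (x0 - w) ∈ interior K := by
    intro n
    refine hKc.add_smul_sub_mem_interior hw hx0 ⟨by positivity, ?_⟩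
    rw [div_le_one (by positivity)]
    linarith [Nat.cast_nonneg (α := ℝ) n]
  have htend : Filter.Tendsto (fun n : ℕ => w + (1/(n+1) : ℝ) • (x0 - w))
      Filter.atTop (nhds w) := by
    have h0 : Filter.Tendsto (fun n : ℕ => (1/(n+1) : ℝ)) Filter.atTop (nhds 0) :=
      tendsto_one_div_add_atTop_nhds_zero_nat
    have := (h0.smul_const (x0 - w)).const_add w
    simpa using this
  exact mem_closure_of_tendsto htend (Filter.Eventually.of_forall hmem)

variable [CompleteSpace E]

private lemma sep3' {K : Set E} (hKc : Convex ℝ K) (hKi : (interior K).Nonempty)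
    (a b c : E)
    (h : ∀ t : E, ¬(a + t ∈ interior K ∧ b + t ∈ interior K ∧ c + t ∈ interior K)) :
    ∃ u1 u2 u3 : E, u1 + u2 + u3 = 0 ∧ ¬(u1 = 0 ∧ u2 = 0 ∧ u3 = 0) ∧
      ∀ x ∈ K, ∀ y ∈ K, ∀ z ∈ K,
        ⟪u1,x⟫ + ⟪u2,y⟫ + ⟪u3,z⟫ ≤ ⟪u1,a⟫ + ⟪u2,b⟫ + ⟪u3,c⟫ := by
  classical
  set C := interior K with hC
  have hCo : IsOpen C := isOpen_interior
  have hCc : Convex ℝ C := hKc.interior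
  obtain ⟨x0, hx0⟩ := hKi
  set A : Set (E × E × E) :=
    (fun p => ((a, b, c) : E × E × E) + p) ⁻¹' (C ×ˢ (C ×ˢ C)) with hA
  have hmemA : ∀ p : E × E × E, p ∈ A ↔ (a + p.1 ∈ C ∧ b + p.2.1 ∈ C ∧ c + p.2.2 ∈ C) := by
    intro p
    rw [hA, Set.mem_preimage, Set.mem_prod, Set.mem_prod]
    rfl
  have hAo : IsOpen A := by
    rw [hA]
    exact ((hCo.prod (hCo.prod hCo))).preimage (continuous_const.add continuous_id)
  have hAc : Convex ℝ A :=
    ((hCc.prod (hCc.prod hCc))).translate_preimage_right _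
  have hAne : A.Nonempty := by
    refine ⟨(x0 - a, x0 - b, x0 - c), (hmemA _).2 ⟨?_, ?_, ?_⟩⟩ <;> simpa using hx0
  set B : Set (E × E × E) := Set.range (fun t : E => (t, t, t)) with hB
  have hBc : Convex ℝ B := by
    rintro p ⟨tp, rfl⟩ q ⟨tq, rfl⟩ s t hs ht hst
    exact ⟨s • tp + t • tq, rfl⟩
  have hdisj : Disjoint A B := by
    rw [Set.disjoint_left]
    rintro p hpA ⟨t, rfl⟩
    obtain ⟨h1, h2, h3⟩ := (hmemA _).1 hpA
    exact h t ⟨h1, h2, h3⟩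
  obtain ⟨f, s, hfA, hfB⟩ := geometric_hahn_banach_open hAc hAo hBc hdisj
  have hs0 : s ≤ 0 := by
    have := hfB (0, 0, 0) ⟨0, rfl⟩
    rw [show ((0, 0, 0) : E × E × E) = 0 from rfl, map_zero] at this; exact this
  have hdiag : ∀ t : E, f (t, t, t) = 0 := by
    intro t
    by_contra hv
    have key : ∀ r : ℝ, s ≤ r * f (t, t, t) := by
      intro r
      have hmem : (r • t, r • t, r • t) ∈ B := ⟨r • t, rfl⟩
      have := hfB _ hmem
      have heq : ((r • t, r • t, r • t) : E × E × E) = r • (t, t, t) := rfl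
      rwa [heq, f.map_smul, smul_eq_mul] at this
    rcases lt_or_gt_of_ne hv with hneg | hpos
    · have := key ((s - 1)/(f (t,t,t)))
      rw [div_mul_cancel₀ _ (ne_of_lt hneg)] at this
      linarith
    · have := key ((s - 1)/(f (t,t,t)))
      rw [div_mul_cancel₀ _ (ne_of_gt hpos)] at this
      linarith
  set φ1 : E →L[ℝ] ℝ := f.comp (ContinuousLinearMap.inl ℝ E (E × E)) with hφ1
  set φ23 : (E × E) →L[ℝ] ℝ := f.comp (ContinuousLinearMap.inr ℝ E (E × E)) with hφ23
  set φ2 : E →L[ℝ] ℝ := φ23.comp (ContinuousLinearMap.inl ℝ E E) with hφ2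
  set φ3 : E →L[ℝ] ℝ := φ23.comp (ContinuousLinearMap.inr ℝ E E) with hφ3
  set u1 : E := (InnerProductSpace.toDual ℝ E).symm φ1 with hu1
  set u2 : E := (InnerProductSpace.toDual ℝ E).symm φ2 with hu2
  set u3 : E := (InnerProductSpace.toDual ℝ E).symm φ3 with hu3
  have hi1 : ∀ x : E, ⟪u1, x⟫ = φ1 x := fun x => InnerProductSpace.toDual_symm_apply
  have hi2 : ∀ x : E, ⟪u2, x⟫ = φ2 x := fun x => InnerProductSpace.toDual_symm_apply
  have hi3 : ∀ x : E, ⟪u3, x⟫ = φ3 x := fun x => InnerProductSpace.toDual_symm_apply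
  have hdecomp : ∀ x y z : E, f (x, y, z) = ⟪u1,x⟫ + ⟪u2,y⟫ + ⟪u3,z⟫ := by
    intro x y z
    rw [hi1, hi2, hi3]
    have heq : (x, y, z) = ((x, (0:E), (0:E)) : E × E × E) + (0, y, 0) + (0, 0, z) := by
      simp
    rw [heq, map_add, map_add]
    simp only [hφ1, hφ2, hφ3, hφ23, ContinuousLinearMap.comp_apply,
      ContinuousLinearMap.inl_apply, ContinuousLinearMap.inr_apply]
    rfl
  refine ⟨u1, u2, u3, ?_, ?_, ?_⟩
  · have hz : ∀ t : E, ⟪u1 + u2 + u3, t⟫ = 0 := by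
      intro t
      rw [inner_add_left, inner_add_left]
      rw [← hdecomp t t t, hdiag t]
    exact inner_self_eq_zero.1 (hz (u1 + u2 + u3))
  · rintro ⟨h1, h2, h3⟩
    obtain ⟨p0, hp0⟩ := hAne
    have hlt := hfA p0 hp0
    have hf0 : f p0 = 0 := by
      rw [show p0 = (p0.1, p0.2.1, p0.2.2) from rfl, hdecomp, h1, h2, h3]
      simp
    rw [hf0] at hlt
    linarith
  · have hint : ∀ x ∈ C, ∀ y ∈ C, ∀ z ∈ C,
        ⟪u1,x⟫ + ⟪u2,y⟫ + ⟪u3,z⟫ ≤ ⟪u1,a⟫ + ⟪u2,b⟫ + ⟪u3,c⟫ := by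
      intro x hx y hy z hz
      have hmem : ((x - a, y - b, z - c) : E × E × E) ∈ A := by
        refine (hmemA _).2 ⟨?_, ?_, ?_⟩ <;> simp <;> assumption
      have hlt := hfA _ hmem
      rw [hdecomp] at hlt
      simp only [inner_sub_right] at hlt
      linarith
    have hsub : K ⊆ closure C := subset_closure_interior' hKc ⟨x0, hx0⟩
    have step1 : ∀ y ∈ C, ∀ z ∈ C, ∀ x ∈ K,
        ⟪u1,x⟫ + ⟪u2,y⟫ + ⟪u3,z⟫ ≤ ⟪u1,a⟫ + ⟪u2,b⟫ + ⟪u3,c⟫ := by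
      intro y hy z hz x hx
      have hcl : closure C ⊆ {x : E | ⟪u1,x⟫ ≤ ⟪u1,a⟫ + ⟪u2,b⟫ + ⟪u3,c⟫ - ⟪u2,y⟫ - ⟪u3,z⟫} := by
        apply closure_minimal
        · intro x' hx'
          have := hint x' hx' y hy z hz
          simp only [Set.mem_setOf_eq]
          linarith
        · exact isClosed_le (continuous_const.inner continuous_id) continuous_const
      have := hcl (hsub hx)
      simp only [Set.mem_setOf_eq] at this
      linarith
    have step2 : ∀ x ∈ K, ∀ z ∈ C, ∀ y ∈ K,
        ⟪u1,x⟫ + ⟪u2,y⟫ + ⟪u3,z⟫ ≤ ⟪u1,a⟫ + ⟪u2,b⟫ + ⟪u3,c⟫ := by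
      intro x hx z hz y hy
      have hcl : closure C ⊆ {y : E | ⟪u2,y⟫ ≤ ⟪u1,a⟫ + ⟪u2,b⟫ + ⟪u3,c⟫ - ⟪u1,x⟫ - ⟪u3,z⟫} := by
        apply closure_minimal
        · intro y' hy'
          have := step1 y' hy' z hz x hx
          simp only [Set.mem_setOf_eq]
          linarith
        · exact isClosed_le (continuous_const.inner continuous_id) continuous_const
      have := hcl (hsub hy)
      simp only [Set.mem_setOf_eq] at this
      linarith
    intro x hx y hy z hz
    have hcl : closure C ⊆ {z : E | ⟪u3,z⟫ ≤ ⟪u1,a⟫ + ⟪u2,b⟫ + ⟪u3,c⟫ - ⟪u1,x⟫ - ⟪u2,y⟫} := by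
      apply closure_minimal
      · intro z' hz'
        have := step2 x hx z' hz' y hy
        simp only [Set.mem_setOf_eq]
        linarith
      · exact isClosed_le (continuous_const.inner continuous_id) continuous_const
    have := hcl (hsub hz)
    simp only [Set.mem_setOf_eq] at this
    linarith

end InnerSpace

section WidthFacts

variable {n : ℕ} {K : Set (EuclideanSpace ℝ (Fin n))}

private lemma width_set_bddBelow' (hKcp : IsCompact K) (hKne : K.Nonempty) :
    BddBelow {w : ℝ | ∃ p : EuclideanSpace ℝ (Fin n), ‖p‖ = 1 ∧
      w = sSup ((fun q => ⟪p, q⟫) '' K) - sInf ((fun q => ⟪p, q⟫) '' K)} := by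
  refine ⟨0, ?_⟩
  rintro w ⟨p, hp, rfl⟩
  have hcp : IsCompact ((fun q => ⟪p, q⟫) '' K) :=
    hKcp.image (continuous_const.inner continuous_id)
  have hne : ((fun q => ⟪p, q⟫) '' K).Nonempty := hKne.image _
  have := csInf_le_csSup hne hcp.bddBelow hcp.bddAbove
  linarith

private lemma width_le_breadth' (hKcp : IsCompact K) (hKne : K.Nonempty)
    {p : EuclideanSpace ℝ (Fin n)} (hp : ‖p‖ = 1) :
    widthB K ≤ sSup ((fun q => ⟪p, q⟫) '' K) - sInf ((fun q => ⟪p, q⟫) '' K) :=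
  csInf_le (width_set_bddBelow' hKcp hKne) ⟨p, hp, rfl⟩

private lemma key3perm' (hKcp : IsCompact K) (hKne : K.Nonempty)
    (u1 u2 u3 a b c : EuclideanSpace ℝ (Fin n))
    (hsum : u1 + u2 + u3 = 0) (h2 : ‖u2‖ ≤ ‖u1‖) (h3 : ‖u3‖ ≤ ‖u1‖) (h1 : u1 ≠ 0)
    (hsep : ∀ x ∈ K, ∀ y ∈ K, ∀ z ∈ K,
      ⟪u1,x⟫ + ⟪u2,y⟫ + ⟪u3,z⟫ ≤ ⟪u1,a⟫ + ⟪u2,b⟫ + ⟪u3,c⟫) :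
    Real.sqrt 3 * widthB K ≤ dist a b + dist b c + dist c a := by
  have hMpos : 0 < ‖u1‖ := norm_pos_iff.2 h1
  set p : EuclideanSpace ℝ (Fin n) := ‖u1‖⁻¹ • u1 with hp
  have hpnorm : ‖p‖ = 1 := by
    rw [hp, norm_smul, norm_inv, norm_norm, inv_mul_cancel₀ (ne_of_gt hMpos)]
  have hcont : Continuous (fun q : EuclideanSpace ℝ (Fin n) => ⟪p, q⟫) :=
    continuous_const.inner continuous_id
  obtain ⟨xM, hxM, hmax⟩ := hKcp.exists_isMaxOn hKne hcont.continuousOn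
  obtain ⟨xm, hxm, hmin⟩ := hKcp.exists_isMinOn hKne hcont.continuousOn
  have hsup : sSup ((fun q => ⟪p, q⟫) '' K) = ⟪p, xM⟫ := by
    apply IsGreatest.csSup_eq
    exact ⟨⟨xM, hxM, rfl⟩, by rintro _ ⟨y, hy, rfl⟩; exact hmax hy⟩
  have hinf : sInf ((fun q => ⟪p, q⟫) '' K) = ⟪p, xm⟫ := by
    apply IsLeast.csInf_eq
    exact ⟨⟨xm, hxm, rfl⟩, by rintro _ ⟨y, hy, rfl⟩; exact hmin hy⟩
  have hW : widthB K ≤ ⟪p, xM⟫ - ⟪p, xm⟫ := by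
    have := width_le_breadth' hKcp hKne hpnorm
    rwa [hsup, hinf] at this
  have hip : ∀ w : EuclideanSpace ℝ (Fin n), ⟪p, w⟫ = ‖u1‖⁻¹ * ⟪u1, w⟫ := by
    intro w
    rw [hp, real_inner_smul_left]
  have hMbr : ‖u1‖ * (⟪p, xM⟫ - ⟪p, xm⟫) = ⟪u1, xM⟫ - ⟪u1, xm⟫ := by
    rw [hip, hip]
    field_simp
  have hneg : -⟪u1, xm⟫ = ⟪u2, xm⟫ + ⟪u3, xm⟫ := by
    have h0 : ⟪u1 + u2 + u3, xm⟫ = (0:ℝ) := by rw [hsum, inner_zero_left]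
    rw [inner_add_left, inner_add_left] at h0
    linarith
  have hMW : ‖u1‖ * widthB K ≤ ⟪u1,a⟫ + ⟪u2,b⟫ + ⟪u3,c⟫ := by
    have h1' : ‖u1‖ * widthB K ≤ ‖u1‖ * (⟪p, xM⟫ - ⟪p, xm⟫) :=
      mul_le_mul_of_nonneg_left hW (le_of_lt hMpos)
    have h2' := hsep xM hxM xm hxm xm hxm
    rw [hMbr] at h1'
    linarith
  have hcore := coreB' u1 u2 u3 a b c hsum h2 h3
  have hs3 : (0:ℝ) ≤ Real.sqrt 3 := Real.sqrt_nonneg 3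
  have hfin : ‖u1‖ * (Real.sqrt 3 * widthB K) ≤ ‖u1‖ * (dist a b + dist b c + dist c a) := by
    calc ‖u1‖ * (Real.sqrt 3 * widthB K) = Real.sqrt 3 * (‖u1‖ * widthB K) := by ring
      _ ≤ Real.sqrt 3 * (⟪u1,a⟫ + ⟪u2,b⟫ + ⟪u3,c⟫) := mul_le_mul_of_nonneg_left hMW hs3
      _ ≤ ‖u1‖ * (dist a b + dist b c + dist c a) := hcore
  exact (mul_le_mul_iff_right₀ hMpos).1 hfin

private lemma key3' (hK : IsConvexBody K) (a b c : EuclideanSpace ℝ (Fin n))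
    (h : ∀ t : EuclideanSpace ℝ (Fin n),
      ¬(a + t ∈ interior K ∧ b + t ∈ interior K ∧ c + t ∈ interior K)) :
    Real.sqrt 3 * widthB K ≤ dist a b + dist b c + dist c a := by
  obtain ⟨hKcp, hKcv, hKi⟩ := hK
  have hKne : K.Nonempty := ⟨hKi.some, interior_subset hKi.some_mem⟩
  obtain ⟨u1, u2, u3, hsum, hne, hsep⟩ := sep3' hKcv hKi a b c h
  rcases le_or_gt ‖u2‖ ‖u1‖ with h21 | h21
  · rcases le_or_gt ‖u3‖ ‖u1‖ with h31 | h31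
    · -- u1 is max
      have h1 : u1 ≠ 0 := by
        rintro rfl
        simp only [norm_zero] at h21 h31
        exact hne ⟨rfl, norm_le_zero_iff.1 h21, norm_le_zero_iff.1 h31⟩
      exact key3perm' hKcp hKne u1 u2 u3 a b c hsum h21 h31 h1 hsep
    · -- u3 is max (u2 ≤ u1 < u3)
      have h3 : u3 ≠ 0 := by
        rintro rfl
        simp at h31
        exact absurd h31 (not_lt.2 (norm_nonneg u1))
      have hsum' : u3 + u1 + u2 = 0 := by rw [← hsum]; abel
      have hsep' : ∀ x ∈ K, ∀ y ∈ K, ∀ z ∈ K,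
          ⟪u3,x⟫ + ⟪u1,y⟫ + ⟪u2,z⟫ ≤ ⟪u3,c⟫ + ⟪u1,a⟫ + ⟪u2,b⟫ := by
        intro x hx y hy z hz
        have := hsep y hy z hz x hx
        linarith
      have := key3perm' hKcp hKne u3 u1 u2 c a b hsum' (le_of_lt h31)
        (le_trans h21 (le_of_lt h31)) h3 hsep'
      linarith [this]
  · rcases le_or_gt ‖u3‖ ‖u2‖ with h32 | h32
    · -- u2 is max
      have h2 : u2 ≠ 0 := by
        rintro rfl
        simp at h21
        exact absurd h21 (not_lt.2 (norm_nonneg u1))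
      have hsum' : u2 + u3 + u1 = 0 := by rw [← hsum]; abel
      have hsep' : ∀ x ∈ K, ∀ y ∈ K, ∀ z ∈ K,
          ⟪u2,x⟫ + ⟪u3,y⟫ + ⟪u1,z⟫ ≤ ⟪u2,b⟫ + ⟪u3,c⟫ + ⟪u1,a⟫ := by
        intro x hx y hy z hz
        have := hsep z hz x hx y hy
        linarith
      have := key3perm' hKcp hKne u2 u3 u1 b c a hsum' h32 (le_of_lt h21) h2 hsep'
      linarith [this]
    · -- u3 is max (u1 < u2 < u3)
      have h3 : u3 ≠ 0 := by
        rintro rfl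
        simp at h32
        exact absurd h32 (not_lt.2 (norm_nonneg u2))
      have hsum' : u3 + u1 + u2 = 0 := by rw [← hsum]; abel
      have hsep' : ∀ x ∈ K, ∀ y ∈ K, ∀ z ∈ K,
          ⟪u3,x⟫ + ⟪u1,y⟫ + ⟪u2,z⟫ ≤ ⟪u3,c⟫ + ⟪u1,a⟫ + ⟪u2,b⟫ := by
        intro x hx y hy z hz
        have := hsep y hy z hz x hx
        linarith
      have := key3perm' hKcp hKne u3 u1 u2 c a b hsum'
        (le_of_lt (lt_trans h21 h32)) (le_of_lt h32) h3 hsep'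
      linarith [this]

end WidthFacts

section Combinatorics

variable {n : ℕ}

/-- Path length bound: triangle inequality along a chain. -/
private lemma path_bound (r : ℕ → EuclideanSpace ℝ (Fin n)) {a b : ℕ} (hab : a ≤ b) :
    dist (r a) (r b) ≤ ∑ t ∈ Finset.Ico a b, dist (r t) (r (t + 1)) := by
  calc dist (r a) (r b) = dist (r (a + 0)) (r (a + (b - a))) := by
        rw [Nat.add_zero, Nat.add_sub_cancel' hab]
    _ ≤ ∑ s ∈ Finset.range (b - a), dist (r (a + s)) (r (a + (s + 1))) :=
        dist_le_range_sum_dist (fun s => r (a + s)) (b - a)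
    _ = ∑ t ∈ Finset.Ico a b, dist (r t) (r (t + 1)) := by
        rw [Finset.sum_Ico_eq_sum_range]
        apply Finset.sum_congr rfl
        intro s _
        rfl

/-- The cyclic polygon length dominates the perimeter of any inscribed triangle
with sorted indices. -/
private lemma arc_bound (q : ℕ → EuclideanSpace ℝ (Fin n)) {m i j k : ℕ}
    (hij : i ≤ j) (hjk : j ≤ k) (hkm : k < m) :
    dist (q i) (q j) + dist (q j) (q k) + dist (q k) (q i)
      ≤ ∑ t ∈ Finset.range m, ‖q ((t + 1) % m) - q t‖ := by
  have hm : 0 < m := lt_of_le_of_lt (Nat.zero_le k) hkm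
  set r : ℕ → EuclideanSpace ℝ (Fin n) := fun t => q (t % m) with hr
  have hsum_eq : ∑ t ∈ Finset.range m, ‖q ((t + 1) % m) - q t‖
      = ∑ t ∈ Finset.Ico 0 m, dist (r t) (r (t + 1)) := by
    rw [Finset.range_eq_Ico]
    apply Finset.sum_congr rfl
    intro t ht
    rw [Finset.mem_Ico] at ht
    rw [hr]
    simp only []
    rw [Nat.mod_eq_of_lt ht.2, dist_eq_norm, norm_sub_rev]
  have e1 := Finset.sum_Ico_consecutive (fun t => dist (r t) (r (t + 1))) (Nat.zero_le i) hij
  have e2 := Finset.sum_Ico_consecutive (fun t => dist (r t) (r (t + 1))) (Nat.zero_le j) hjk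
  have e3 := Finset.sum_Ico_consecutive (fun t => dist (r t) (r (t + 1))) (Nat.zero_le k) (le_of_lt hkm)
  have b1 := path_bound r (Nat.zero_le i)
  have b2 := path_bound r hij
  have b3 := path_bound r hjk
  have b4 := path_bound r (le_of_lt hkm)
  have hri : r i = q i := by
    rw [hr]; simp only []; rw [Nat.mod_eq_of_lt (lt_of_le_of_lt (le_trans hij hjk) hkm)]
  have hrj : r j = q j := by
    rw [hr]; simp only []; rw [Nat.mod_eq_of_lt (lt_of_le_of_lt hjk hkm)]
  have hrk : r k = q k := by
    rw [hr]; simp only []; rw [Nat.mod_eq_of_lt hkm]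
  have hr0 : r 0 = q 0 := by
    rw [hr]; simp only []; rw [Nat.zero_mod]
  have hrm : r m = q 0 := by
    rw [hr]; simp only []; rw [Nat.mod_self]
  have htri : dist (q k) (q i) ≤ dist (q k) (q 0) + dist (q 0) (q i) := dist_triangle _ _ _
  rw [hri, hrj] at b2
  rw [hrj, hrk] at b3
  rw [hr0, hri] at b1
  rw [hrk, hrm] at b4
  rw [hsum_eq]
  linarith

/-- Helly-type extraction of three bad indices. -/
private lemma exists_three {K : Set (EuclideanSpace ℝ (Fin 2))} (hKcv : Convex ℝ K)
    {m : ℕ} (hm : 0 < m) {q : ℕ → EuclideanSpace ℝ (Fin 2)}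
    (hq : NotTranslatableInto m q K) :
    ∃ i j k, i ≤ j ∧ j ≤ k ∧ k < m ∧
      ∀ t : EuclideanSpace ℝ (Fin 2),
        ¬(q i + t ∈ interior K ∧ q j + t ∈ interior K ∧ q k + t ∈ interior K) := by
  classical
  set F : ℕ → Set (EuclideanSpace ℝ (Fin 2)) :=
    fun i => (fun t => q i + t) ⁻¹' (interior K) with hF
  have hFc : ∀ i ∈ Finset.range m, Convex ℝ (F i) :=
    fun i _ => (hKcv.interior).translate_preimage_right _
  have hempty : ¬(⋂ i ∈ Finset.range m, F i).Nonempty := by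
    rintro ⟨t, ht⟩
    obtain ⟨i, him, hiK⟩ := hq t
    have : t ∈ F i := by
      have := Set.mem_iInter₂.1 ht i (Finset.mem_range.2 him)
      exact this
    exact hiK this
  have hnot : ¬(∀ I ⊆ Finset.range m, I.card ≤ Module.finrank ℝ (EuclideanSpace ℝ (Fin 2)) + 1 →
      (⋂ i ∈ I, F i).Nonempty) := by
    intro hall
    exact hempty (Convex.helly_theorem' hFc hall)
  push_neg at hnot
  obtain ⟨I, hIsub, hIcard, hIempty⟩ := hnot
  rw [finrank_euclideanSpace_fin] at hIcard
  have hIne : I.Nonempty := by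
    rcases Finset.eq_empty_or_nonempty I with rfl | hne
    · exfalso
      simp only [Finset.notMem_empty, Set.iInter_of_empty, Set.iInter_univ] at hIempty
      exact (Set.univ_nonempty).ne_empty hIempty
    · exact hne
  -- sort the indices
  have hsort := Finset.pairwise_sort I (· ≤ ·)
  have hmemsort : ∀ x, x ∈ Finset.sort I (· ≤ ·) ↔ x ∈ I := fun x => Finset.mem_sort _
  have hlen : (Finset.sort I (· ≤ ·)).length = I.card := Finset.length_sort _
  have hlm : ∀ x ∈ I, x < m := fun x hx => Finset.mem_range.1 (hIsub hx)
  have key : ∀ (i j k : ℕ), i ≤ j → j ≤ k → k ∈ I → (∀ x ∈ I, x = i ∨ x = j ∨ x = k) →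
      ∃ i' j' k', i' ≤ j' ∧ j' ≤ k' ∧ k' < m ∧
        ∀ t : EuclideanSpace ℝ (Fin 2),
          ¬(q i' + t ∈ interior K ∧ q j' + t ∈ interior K ∧ q k' + t ∈ interior K) := by
    intro i j k hij hjk hkI hcover
    refine ⟨i, j, k, hij, hjk, hlm k hkI, ?_⟩
    intro t ⟨h1, h2, h3⟩
    have hmem : t ∈ ⋂ i ∈ I, F i := by
      refine Set.mem_iInter₂.2 ?_
      intro x hx
      rcases hcover x hx with rfl | rfl | rfl
      · exact h1
      · exact h2
      · exact h3
    rw [hIempty] at hmem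
    exact Set.notMem_empty t hmem
  rcases hl : Finset.sort I (· ≤ ·) with _ | ⟨i, _ | ⟨j, _ | ⟨k, rest⟩⟩⟩
  · exfalso
    rw [hl] at hlen
    simp at hlen
    rw [← Finset.card_pos] at hIne
    omega
  · refine key i i i le_rfl le_rfl ?_ ?_
    · rw [← hmemsort, hl]; simp
    · intro x hx
      rw [← hmemsort, hl] at hx
      simp at hx
      tauto
  · rw [hl] at hsort
    have hij : i ≤ j := by
      simp [List.pairwise_cons] at hsort
      tauto
    refine key i j j hij le_rfl ?_ ?_
    · rw [← hmemsort, hl]; simp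
    · intro x hx
      rw [← hmemsort, hl] at hx
      simp at hx
      tauto
  · have hrlen : rest.length = 0 := by
      rw [hl] at hlen
      simp only [List.length_cons] at hlen
      omega
    have hrest : rest = [] := List.length_eq_zero_iff.1 hrlen
    subst hrest
    rw [hl] at hsort
    simp [List.pairwise_cons] at hsort
    refine key i j k hsort.1.1 hsort.2 ?_ ?_
    · rw [← hmemsort, hl]; simp
    · intro x hx
      rw [← hmemsort, hl] at hx
      simp at hx
      tauto

end Combinatorics

section Main

private lemma xiB_set_nonempty {K : Set (EuclideanSpace ℝ (Fin 2))} (hK : IsConvexBody K) :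
    {ℓ : ℝ | ∃ m : ℕ, 2 ≤ m ∧ ∃ q : ℕ → EuclideanSpace ℝ (Fin 2),
      NotTranslatableInto m q K ∧
      ℓ = ∑ i ∈ Finset.range m, ‖q ((i + 1) % m) - q i‖}.Nonempty := by
  classical
  obtain ⟨R, hR⟩ := hK.1.isBounded.subset_closedBall 0
  have hR' : K ⊆ Metric.closedBall 0 |R| :=
    hR.trans (Metric.closedBall_subset_closedBall (le_abs_self R))
  set v : EuclideanSpace ℝ (Fin 2) := (2*|R|+1) • EuclideanSpace.single (0 : Fin 2) (1:ℝ)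
    with hv
  have hvnorm : ‖v‖ = 2*|R|+1 := by
    rw [hv, norm_smul, EuclideanSpace.norm_single]
    simp [abs_of_nonneg (by positivity : (0:ℝ) ≤ 2*|R|+1)]
  set q : ℕ → EuclideanSpace ℝ (Fin 2) := fun i => if i = 0 then 0 else v with hqdef
  have hq : NotTranslatableInto 2 q K := by
    intro t
    by_contra hcon
    push_neg at hcon
    have h0 : q 0 + t ∈ interior K := hcon 0 (by norm_num)
    have h1 : q 1 + t ∈ interior K := hcon 1 (by norm_num)
    have ht : t ∈ K := by
      have : q 0 + t = t := by rw [hqdef]; simp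
      rw [this] at h0
      exact interior_subset h0
    have hvt : v + t ∈ K := by
      have : q 1 + t = v + t := by rw [hqdef]; simp
      rw [this] at h1
      exact interior_subset h1
    have ht' : ‖t‖ ≤ |R| := by
      have := hR' ht
      rwa [Metric.mem_closedBall, dist_zero_right] at this
    have hvt' : ‖v + t‖ ≤ |R| := by
      have := hR' hvt
      rwa [Metric.mem_closedBall, dist_zero_right] at this
    have : ‖v‖ ≤ ‖v + t‖ + ‖t‖ := by
      calc ‖v‖ = ‖(v + t) - t‖ := by congr 1; abel
        _ ≤ ‖v + t‖ + ‖t‖ := norm_sub_le _ _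
    rw [hvnorm] at this
    linarith
  exact ⟨∑ i ∈ Finset.range 2, ‖q ((i + 1) % 2) - q i‖, 2, le_rfl, q, hq, rfl⟩

end Main

/-- For every planar convex body, `ξ_B(K) ≥ √3 · w_B(K)`. -/
theorem xiB_ge_sqrt3_width (K : Set (EuclideanSpace ℝ (Fin 2))) (hK : IsConvexBody K) :
    Real.sqrt 3 * widthB K ≤ xiB K := by
  rw [xiB]
  apply le_csInf (xiB_set_nonempty hK)
  rintro ℓ ⟨m, hm2, q, hq, rfl⟩
  obtain ⟨i, j, k, hij, hjk, hkm, h3⟩ :=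
    exists_three hK.2.1 (lt_of_lt_of_le (by norm_num) hm2) hq
  have hkey := key3' hK (q i) (q j) (q k) h3
  have harc := arc_bound q hij hjk hkm
  linarith
end

section
/- If Δ ⊂ ℝ² is an equilateral triangle, then ξ_B(Δ) = √3 · w_B(Δ); equivalently, the perimeter of the medial (midpoint) triangle of Δ equals √3 times the altitude of Δ. Hence the inequality ξ_B(K) ≥ √3·w_B(K) for planar convex bodies is sharp. -/
open scoped RealInnerProductSpace Pointwise
open MeasureTheory

set_option maxHeartbeats 1000000

local notation "E2" => EuclideanSpace ℝ (Fin 2)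

lemma rep_lemma (u v : E2) (hu : ‖u‖ = 1) (hv : ‖v‖ = 1)
    (huv : ⟪u, v⟫ = -(1/2)) (w : E2) :
    ∃ a b : ℝ, w = a • u + b • v := by
  have huu : ⟪u,u⟫ = 1 := by rw [real_inner_self_eq_norm_sq, hu]; norm_num
  have hvv : ⟪v,v⟫ = 1 := by rw [real_inner_self_eq_norm_sq, hv]; norm_num
  have hvu : ⟪v,u⟫ = -(1/2) := by rw [real_inner_comm]; exact huv
  have li : LinearIndependent ℝ ![u, v] := by
    rw [Fintype.linearIndependent_iff]
    intro g hg
    rw [Fin.sum_univ_two] at hg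
    simp only [Matrix.cons_val_zero, Matrix.cons_val_one, Matrix.head_cons] at hg
    have e1 : ⟪g 0 • u + g 1 • v, u⟫ = 0 := by rw [hg]; simp
    have e2 : ⟪g 0 • u + g 1 • v, v⟫ = 0 := by rw [hg]; simp
    rw [inner_add_left, real_inner_smul_left, real_inner_smul_left, huu, hvu] at e1
    rw [inner_add_left, real_inner_smul_left, real_inner_smul_left, huv, hvv] at e2
    have h0 : g 0 = 0 := by linarith
    have h1 : g 1 = 0 := by linarith
    intro i; fin_cases i <;> assumption
  have hsp : Submodule.span ℝ ({u, v} : Set E2) = ⊤ := by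
    have hr : Set.range ![u, v] = ({u, v} : Set E2) := by
      ext x
      simp [Matrix.range_cons, Matrix.range_empty]; tauto
    apply Submodule.eq_top_of_finrank_eq
    have h2 := finrank_span_eq_card li
    rw [hr] at h2
    rw [h2, finrank_euclideanSpace_fin]
    simp
  have : w ∈ Submodule.span ℝ ({u, v} : Set E2) := by rw [hsp]; trivial
  obtain ⟨a, b, hab⟩ := Submodule.mem_span_pair.1 this
  exact ⟨a, b, hab.symm⟩

lemma ortho_zero (u v : E2) (hu : ‖u‖ = 1) (hv : ‖v‖ = 1)
    (huv : ⟪u, v⟫ = -(1/2)) (z : E2) (h1 : ⟪u, z⟫ = 0) (h2 : ⟪v, z⟫ = 0) : z = 0 := by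
  obtain ⟨a, b, hab⟩ := rep_lemma u v hu hv huv z
  have hz : ⟪z, z⟫ = 0 := by
    nth_rewrite 1 [hab]
    rw [inner_add_left, real_inner_smul_left, real_inner_smul_left,
      h1, h2]
    ring
  exact inner_self_eq_zero.1 hz


lemma frame_identity (u v : E2) (hu : ‖u‖ = 1) (hv : ‖v‖ = 1)
    (huv : ⟪u, v⟫ = -(1/2)) (p : E2) :
    ⟪u,p⟫^2 + ⟪v,p⟫^2 + ⟪-u-v,p⟫^2 = 3/2 * ‖p‖^2 := by
  have huu : ⟪u,u⟫ = 1 := by rw [real_inner_self_eq_norm_sq, hu]; norm_num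
  have hvv : ⟪v,v⟫ = 1 := by rw [real_inner_self_eq_norm_sq, hv]; norm_num
  have hvu : ⟪v,u⟫ = -(1/2) := by rw [real_inner_comm]; exact huv
  set c1 := ⟪u,p⟫ with hc1
  set c2 := ⟪v,p⟫ with hc2
  have hc3 : ⟪-u-v,p⟫ = -c1 - c2 := by
    rw [inner_sub_left, inner_neg_left]
  set z := (c1 • u + c2 • v + (-c1-c2) • (-u-v)) - (3/2 : ℝ) • p with hz
  have hzu : ⟪u, z⟫ = 0 := by
    rw [hz, inner_sub_right, inner_add_right, inner_add_right, real_inner_smul_right,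
      real_inner_smul_right, real_inner_smul_right, real_inner_smul_right,
      inner_sub_right, inner_neg_right, huu, huv]
    simp only [hc1]
    ring
  have hzv : ⟪v, z⟫ = 0 := by
    rw [hz, inner_sub_right, inner_add_right, inner_add_right, real_inner_smul_right,
      real_inner_smul_right, real_inner_smul_right, real_inner_smul_right,
      inner_sub_right, inner_neg_right, hvu, hvv]
    simp only [hc2]
    ring
  have hz0 : z = 0 := ortho_zero u v hu hv huv z hzu hzv
  have hzz : (c1 • u + c2 • v + (-c1-c2) • (-u-v)) = (3/2 : ℝ) • p := by
    have := sub_eq_zero.1 hz0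
    exact this
  have key : ⟪c1 • u + c2 • v + (-c1-c2) • (-u-v), p⟫ = 3/2 * ‖p‖^2 := by
    rw [hzz, real_inner_smul_left, real_inner_self_eq_norm_sq]
  rw [inner_add_left, inner_add_left, real_inner_smul_left, real_inner_smul_left,
    real_inner_smul_left] at key
  simp only [hc3, ← hc1, ← hc2] at key
  rw [hc3]
  nlinarith [key]

lemma maxsq (c1 c2 c3 : ℝ) (h0 : c1 + c2 + c3 = 0) (h2 : c1^2 + c2^2 + c3^2 = 3/2) :
    3/4 ≤ c1^2 ∨ 3/4 ≤ c2^2 ∨ 3/4 ≤ c3^2 := by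
  by_contra hc
  push_neg at hc
  obtain ⟨ha, hb, hcc⟩ := hc
  have e1 : c2 * c3 = c1^2 - 3/4 := by linear_combination ((c2+c3-c1)/2) * h0 - (1/2) * h2
  have e2 : c1 * c3 = c2^2 - 3/4 := by linear_combination ((c1+c3-c2)/2) * h0 - (1/2) * h2
  have e3 : c1 * c2 = c3^2 - 3/4 := by linear_combination ((c1+c2-c3)/2) * h0 - (1/2) * h2
  nlinarith [sq_nonneg (c1*c2*c3), mul_pos (mul_pos (by linarith : (0:ℝ) < 3/4 - c1^2) (by linarith : (0:ℝ) < 3/4 - c2^2)) (by linarith : (0:ℝ) < 3/4 - c3^2)]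

lemma chunk {α : Type*} [PseudoMetricSpace α] (f : ℕ → α) {a b : ℕ} (h : a ≤ b) :
    dist (f a) (f b) ≤ ∑ i ∈ Finset.Ico a b, dist (f i) (f (i + 1)) := by
  have h2 := dist_le_range_sum_dist (fun i => f (a + i)) (b - a)
  simp only [Nat.add_zero] at h2
  rw [Nat.add_sub_cancel' h] at h2
  rw [Finset.sum_Ico_eq_sum_range]
  exact h2

lemma cyclic_sorted {m : ℕ} (q : ℕ → E2) {j1 j2 j3 : ℕ}
    (h12 : j1 ≤ j2) (h23 : j2 ≤ j3) (h3 : j3 < m) :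
    dist (q j1) (q j2) + dist (q j2) (q j3) + dist (q j3) (q j1) ≤
      ∑ i ∈ Finset.range m, ‖q ((i + 1) % m) - q i‖ := by
  have hm : 0 < m := lt_of_le_of_lt (Nat.zero_le _) h3
  set f : ℕ → E2 := fun i => q (i % m) with hf
  have hterm : ∀ i ∈ Finset.range m, ‖q ((i + 1) % m) - q i‖ = dist (f i) (f (i + 1)) := by
    intro i hi
    rw [Finset.mem_range] at hi
    rw [hf]
    simp only []
    rw [Nat.mod_eq_of_lt hi, dist_eq_norm, norm_sub_rev]
  rw [Finset.sum_congr rfl hterm]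
  rw [Finset.range_eq_Ico,
    ← Finset.sum_Ico_consecutive (fun i => dist (f i) (f (i+1))) (Nat.zero_le j3) (le_of_lt h3),
    ← Finset.sum_Ico_consecutive (fun i => dist (f i) (f (i+1))) (Nat.zero_le j2) h23,
    ← Finset.sum_Ico_consecutive (fun i => dist (f i) (f (i+1))) (Nat.zero_le j1) h12]
  have c1 := chunk f (Nat.zero_le j1)
  have c2 := chunk f h12
  have c3 := chunk f h23
  have c4 := chunk f (le_of_lt h3)
  have e0 : f 0 = q 0 := by simp [hf, Nat.mod_eq_of_lt hm]
  have e1 : f j1 = q j1 := by simp [hf, Nat.mod_eq_of_lt (lt_of_le_of_lt (le_trans h12 h23) h3)]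
  have e2 : f j2 = q j2 := by simp [hf, Nat.mod_eq_of_lt (lt_of_le_of_lt h23 h3)]
  have e3 : f j3 = q j3 := by simp [hf, Nat.mod_eq_of_lt h3]
  have em : f m = q 0 := by simp [hf, Nat.mod_self]
  rw [e0, e1] at c1
  rw [e1, e2] at c2
  rw [e2, e3] at c3
  rw [e3, em] at c4
  have tri : dist (q j3) (q j1) ≤ dist (q j3) (q 0) + dist (q 0) (q j1) := dist_triangle _ _ _
  linarith

lemma cyclic_three {m : ℕ} (q : ℕ → E2) {j1 j2 j3 : ℕ}
    (ha : j1 < m) (hb : j2 < m) (hc : j3 < m) :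
    dist (q j1) (q j2) + dist (q j2) (q j3) + dist (q j3) (q j1) ≤
      ∑ i ∈ Finset.range m, ‖q ((i + 1) % m) - q i‖ := by
  rcases le_total j1 j2 with h12 | h21 <;> rcases le_total j2 j3 with h23 | h32 <;>
    rcases le_total j1 j3 with h13 | h31
  · exact cyclic_sorted q h12 h23 hc
  · exact cyclic_sorted q h12 h23 hc
  · have h := cyclic_sorted q h13 h32 hb
    linarith [dist_comm (q j1) (q j2), dist_comm (q j2) (q j3), dist_comm (q j1) (q j3)]
  · have h := cyclic_sorted q h31 h12 hb
    linarith
  · have h := cyclic_sorted q h21 h13 hc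
    linarith [dist_comm (q j1) (q j2), dist_comm (q j2) (q j3), dist_comm (q j1) (q j3)]
  · have h := cyclic_sorted q h23 h31 ha
    linarith
  · have h := cyclic_sorted q h32 h21 ha
    linarith [dist_comm (q j1) (q j2), dist_comm (q j2) (q j3), dist_comm (q j1) (q j3)]
  · have h := cyclic_sorted q h32 h21 ha
    linarith [dist_comm (q j1) (q j2), dist_comm (q j2) (q j3), dist_comm (q j1) (q j3)]

lemma key_ineq (n1 n2 n3 : E2) (h1 : ‖n1‖ = 1) (h2 : ‖n2‖ = 1) (h3 : ‖n3‖ = 1)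
    (h12 : ⟪n1,n2⟫ = -(1/2)) (h23 : ⟪n2,n3⟫ = -(1/2)) (h31 : ⟪n3,n1⟫ = -(1/2))
    (hsum : n1 + n2 + n3 = 0) (a b c : E2) :
    Real.sqrt 3 * (⟪n1,a⟫ + ⟪n2,b⟫ + ⟪n3,c⟫) ≤ dist a b + dist b c + dist c a := by
  have nrm : ∀ x y : E2, ‖x‖ = 1 → ‖y‖ = 1 → ⟪x,y⟫ = -(1/2) → ‖x - y‖ = Real.sqrt 3 := by
    intro x y hx hy hxy
    rw [← Real.sqrt_sq (norm_nonneg (x - y))]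
    congr 1
    rw [norm_sub_sq_real, hx, hy, hxy]; ring
  have d12 : ‖n1 - n2‖ = Real.sqrt 3 := nrm _ _ h1 h2 h12
  have d23 : ‖n2 - n3‖ = Real.sqrt 3 := nrm _ _ h2 h3 h23
  have d31 : ‖n3 - n1‖ = Real.sqrt 3 := nrm _ _ h3 h1 h31
  have cs1 : ⟪n1 - n2, a - b⟫ ≤ Real.sqrt 3 * dist a b := by
    calc ⟪n1 - n2, a - b⟫ ≤ ‖n1 - n2‖ * ‖a - b‖ := real_inner_le_norm _ _
      _ = Real.sqrt 3 * dist a b := by rw [d12, dist_eq_norm]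
  have cs2 : ⟪n2 - n3, b - c⟫ ≤ Real.sqrt 3 * dist b c := by
    calc ⟪n2 - n3, b - c⟫ ≤ ‖n2 - n3‖ * ‖b - c‖ := real_inner_le_norm _ _
      _ = Real.sqrt 3 * dist b c := by rw [d23, dist_eq_norm]
  have cs3 : ⟪n3 - n1, c - a⟫ ≤ Real.sqrt 3 * dist c a := by
    calc ⟪n3 - n1, c - a⟫ ≤ ‖n3 - n1‖ * ‖c - a‖ := real_inner_le_norm _ _
      _ = Real.sqrt 3 * dist c a := by rw [d31, dist_eq_norm]
  have z0 : ∀ x : E2, ⟪n1,x⟫ + ⟪n2,x⟫ + ⟪n3,x⟫ = 0 := by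
    intro x
    have : ⟪n1 + n2 + n3, x⟫ = 0 := by rw [hsum]; simp
    rw [inner_add_left, inner_add_left] at this
    linarith
  rw [inner_sub_left, inner_sub_right, inner_sub_right] at cs1
  rw [inner_sub_left, inner_sub_right, inner_sub_right] at cs2
  rw [inner_sub_left, inner_sub_right, inner_sub_right] at cs3
  have h3T : 3 * (⟪n1,a⟫ + ⟪n2,b⟫ + ⟪n3,c⟫) ≤
      Real.sqrt 3 * (dist a b + dist b c + dist c a) := by
    have za := z0 a; have zb := z0 b; have zc := z0 c
    nlinarith [cs1, cs2, cs3]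
  have h5 := mul_le_mul_of_nonneg_left h3T (Real.sqrt_nonneg 3)
  have h6 : Real.sqrt 3 * (Real.sqrt 3 * (dist a b + dist b c + dist c a)) =
      3 * (dist a b + dist b c + dist c a) := by
    rw [← mul_assoc, Real.mul_self_sqrt (by norm_num : (0:ℝ) ≤ 3)]
  linarith [h5, h6]

/-- For an equilateral triangle `Δ`, `ξ_B(Δ) = √3 · w_B(Δ)`; equivalently, the perimeter
of the medial triangle equals `√3` times the altitude (= width) of `Δ`. Hence
`ξ_B(K) ≥ √3 w_B(K)` is sharp. -/
theorem xiB_equilateral_eq_sqrt3_width (A B C : EuclideanSpace ℝ (Fin 2))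
    (hpos : 0 < dist A B) (h1 : dist A B = dist B C) (h2 : dist B C = dist C A) :
    xiB (convexHull ℝ {A, B, C}) = Real.sqrt 3 * widthB (convexHull ℝ {A, B, C}) ∧
    dist (midpoint ℝ A B) (midpoint ℝ B C) + dist (midpoint ℝ B C) (midpoint ℝ C A) +
        dist (midpoint ℝ C A) (midpoint ℝ A B) =
      Real.sqrt 3 * widthB (convexHull ℝ {A, B, C}) := by
  obtain ⟨s, hs⟩ : ∃ x : ℝ, x = dist A B := ⟨_, rfl⟩
  rw [← hs] at hpos h1
  have hsAB : ‖A - B‖ = s := by rw [hs, dist_eq_norm]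
  have hsBC : ‖B - C‖ = s := by rw [← dist_eq_norm, ← h1]
  have hsCA : ‖C - A‖ = s := by rw [← dist_eq_norm, ← h2, ← h1]
  have hab : ⟪A - B, A - B⟫ = s^2 := by rw [real_inner_self_eq_norm_sq, hsAB]
  have hbc : ⟪B - C, B - C⟫ = s^2 := by rw [real_inner_self_eq_norm_sq, hsBC]
  have hca : ⟪C - A, C - A⟫ = s^2 := by rw [real_inner_self_eq_norm_sq, hsCA]
  simp only [inner_sub_left, inner_sub_right] at hab hbc hca
  have cAB : ⟪A,B⟫ = ⟪B,A⟫ := real_inner_comm B A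
  have cBC : ⟪B,C⟫ = ⟪C,B⟫ := real_inner_comm C B
  have cCA : ⟪C,A⟫ = ⟪A,C⟫ := real_inner_comm A C
  obtain ⟨N1, hN1⟩ : ∃ z : E2, z = A + B - (2:ℝ) • C := ⟨_, rfl⟩
  obtain ⟨N2, hN2⟩ : ∃ z : E2, z = B + C - (2:ℝ) • A := ⟨_, rfl⟩
  obtain ⟨N3, hN3⟩ : ∃ z : E2, z = C + A - (2:ℝ) • B := ⟨_, rfl⟩
  obtain ⟨H1, hH1⟩ : ∃ z : ℝ, z = ⟪N1, A⟫ := ⟨_, rfl⟩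
  obtain ⟨H2, hH2⟩ : ∃ z : ℝ, z = ⟪N2, B⟫ := ⟨_, rfl⟩
  obtain ⟨H3, hH3⟩ : ∃ z : ℝ, z = ⟪N3, C⟫ := ⟨_, rfl⟩
  have hN1B : ⟪N1, B⟫ = H1 := by
    rw [hH1, hN1]
    simp only [inner_sub_left, inner_add_left, real_inner_smul_left]
    linarith
  have hN1C : ⟪N1, C⟫ = H1 - 3*s^2/2 := by
    rw [hH1, hN1]
    simp only [inner_sub_left, inner_add_left, real_inner_smul_left]
    linarith
  have hN2C : ⟪N2, C⟫ = H2 := by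
    rw [hH2, hN2]
    simp only [inner_sub_left, inner_add_left, real_inner_smul_left]
    linarith
  have hN2A : ⟪N2, A⟫ = H2 - 3*s^2/2 := by
    rw [hH2, hN2]
    simp only [inner_sub_left, inner_add_left, real_inner_smul_left]
    linarith
  have hN3A : ⟪N3, A⟫ = H3 := by
    rw [hH3, hN3]
    simp only [inner_sub_left, inner_add_left, real_inner_smul_left]
    linarith
  have hN3B : ⟪N3, B⟫ = H3 - 3*s^2/2 := by
    rw [hH3, hN3]
    simp only [inner_sub_left, inner_add_left, real_inner_smul_left]
    linarith
  have hNsum : N1 + N2 + N3 = 0 := by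
    rw [hN1, hN2, hN3]; module
  have g11 : ⟪N1, N1⟫ = 3*s^2 := by
    rw [hN1]
    simp only [inner_sub_left, inner_add_left, real_inner_smul_left,
      inner_sub_right, inner_add_right, real_inner_smul_right]
    linarith
  have g22 : ⟪N2, N2⟫ = 3*s^2 := by
    rw [hN2]
    simp only [inner_sub_left, inner_add_left, real_inner_smul_left,
      inner_sub_right, inner_add_right, real_inner_smul_right]
    linarith
  have g33 : ⟪N3, N3⟫ = 3*s^2 := by
    rw [hN3]
    simp only [inner_sub_left, inner_add_left, real_inner_smul_left,
      inner_sub_right, inner_add_right, real_inner_smul_right]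
    linarith
  have g12 : ⟪N1, N2⟫ = -(3*s^2)/2 := by
    rw [hN1, hN2]
    simp only [inner_sub_left, inner_add_left, real_inner_smul_left,
      inner_sub_right, inner_add_right, real_inner_smul_right]
    linarith
  have g13 : ⟪N1, N3⟫ = -(3*s^2)/2 := by
    rw [hN1, hN3]
    simp only [inner_sub_left, inner_add_left, real_inner_smul_left,
      inner_sub_right, inner_add_right, real_inner_smul_right]
    linarith
  have g23 : ⟪N2, N3⟫ = -(3*s^2)/2 := by
    rw [hN2, hN3]
    simp only [inner_sub_left, inner_add_left, real_inner_smul_left,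
      inner_sub_right, inner_add_right, real_inner_smul_right]
    linarith
  have hHsum : H1 + H2 + H3 = 3*s^2/2 := by
    rw [hH1, hH2, hH3, hN1, hN2, hN3]
    simp only [inner_sub_left, inner_add_left, real_inner_smul_left]
    linarith
  have hBACB : ⟪B - A, C - B⟫ = -(s^2)/2 := by
    simp only [inner_sub_left, inner_sub_right]
    linarith
  -- unit normals
  have hs3 : Real.sqrt 3 * Real.sqrt 3 = 3 := Real.mul_self_sqrt (by norm_num)
  have hs3pos : 0 < Real.sqrt 3 := by positivity
  have hsne : s ≠ 0 := ne_of_gt hpos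
  obtain ⟨κ, hκ⟩ : ∃ κ : ℝ, κ = (Real.sqrt 3 * s)⁻¹ := ⟨_, rfl⟩
  have hκpos : 0 < κ := by rw [hκ]; positivity
  have hsq3 : (Real.sqrt 3 * s)^2 = 3*s^2 := by linear_combination s^2 * hs3
  have hκ2 : κ^2 * (3*s^2) = 1 := by
    rw [hκ, inv_pow, ← hsq3]
    field_simp
  have hκ3 : Real.sqrt 3 * κ = s⁻¹ := by
    rw [hκ]
    field_simp
  obtain ⟨n1, hn1⟩ : ∃ z : E2, z = κ • N1 := ⟨_, rfl⟩
  obtain ⟨n2, hn2⟩ : ∃ z : E2, z = κ • N2 := ⟨_, rfl⟩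
  obtain ⟨n3, hn3⟩ : ∃ z : E2, z = κ • N3 := ⟨_, rfl⟩
  have hnorm : ∀ N : E2, ⟪N, N⟫ = 3*s^2 → ‖κ • N‖ = 1 := by
    intro N hNN
    have hN : ‖N‖ = Real.sqrt 3 * s := by
      have e1 : ‖N‖^2 = (Real.sqrt 3 * s)^2 := by
        rw [← real_inner_self_eq_norm_sq, hNN]; linear_combination (-(s^2)) * hs3
      calc ‖N‖ = Real.sqrt (‖N‖^2) := (Real.sqrt_sq (norm_nonneg N)).symm
        _ = Real.sqrt ((Real.sqrt 3 * s)^2) := by rw [e1]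
        _ = Real.sqrt 3 * s := Real.sqrt_sq (by positivity)
    rw [norm_smul, hN, Real.norm_eq_abs, abs_of_pos hκpos, hκ]
    field_simp
  have hun1 : ‖n1‖ = 1 := by rw [hn1]; exact hnorm N1 g11
  have hun2 : ‖n2‖ = 1 := by rw [hn2]; exact hnorm N2 g22
  have hun3 : ‖n3‖ = 1 := by rw [hn3]; exact hnorm N3 g33
  have hgram : ∀ N M : E2, ⟪N, M⟫ = -(3*s^2)/2 → ⟪κ • N, κ • M⟫ = -(1/2) := by
    intro N M hNM
    rw [real_inner_smul_left, real_inner_smul_right, hNM]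
    linear_combination (-(1/2:ℝ)) * hκ2
  have hn12 : ⟪n1, n2⟫ = -(1/2) := by rw [hn1, hn2]; exact hgram N1 N2 g12
  have hn23 : ⟪n2, n3⟫ = -(1/2) := by rw [hn2, hn3]; exact hgram N2 N3 g23
  have hn31 : ⟪n3, n1⟫ = -(1/2) := by
    rw [hn3, hn1, real_inner_comm]; exact hgram N1 N3 g13
  have hnsum : n1 + n2 + n3 = 0 := by
    rw [hn1, hn2, hn3, ← smul_add, ← smul_add, hNsum, smul_zero]
  -- the triangle
  obtain ⟨Δ, hΔ⟩ : ∃ K : Set (EuclideanSpace ℝ (Fin 2)), K = convexHull ℝ {A, B, C} := ⟨_, rfl⟩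
  have hAmem : A ∈ Δ := by rw [hΔ]; exact subset_convexHull ℝ _ (by simp)
  have hBmem : B ∈ Δ := by rw [hΔ]; exact subset_convexHull ℝ _ (by simp)
  have hCmem : C ∈ Δ := by rw [hΔ]; exact subset_convexHull ℝ _ (by simp)
  have hconv : Convex ℝ Δ := by rw [hΔ]; exact convex_convexHull ℝ _
  have hcomp : IsCompact Δ := by
    rw [hΔ]
    exact (Set.toFinite _).isCompact_convexHull ℝ
  have hlin : ∀ N : E2, IsLinearMap ℝ (fun y : E2 => ⟪N, y⟫) := by
    intro N
    exact ⟨fun x y => inner_add_right N x y, fun c x => real_inner_smul_right N x c⟩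
  -- F1 : halfplane bounds
  have hhalf : ∀ (N : E2) (H : ℝ), ⟪N, A⟫ ≤ H → ⟪N, B⟫ ≤ H → ⟪N, C⟫ ≤ H →
      ∀ y ∈ Δ, ⟪N, y⟫ ≤ H := by
    intro N H ha hb hc y hy
    rw [hΔ] at hy
    have : convexHull ℝ {A, B, C} ⊆ {y : E2 | ⟪N, y⟫ ≤ H} := by
      apply convexHull_min
      · rintro x (rfl | rfl | rfl) <;> assumption
      · exact convex_halfSpace_le (hlin N) H
    exact this hy
  have hhalfge : ∀ (N : E2) (H : ℝ), H ≤ ⟪N, A⟫ → H ≤ ⟪N, B⟫ → H ≤ ⟪N, C⟫ →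
      ∀ y ∈ Δ, H ≤ ⟪N, y⟫ := by
    intro N H ha hb hc y hy
    rw [hΔ] at hy
    have : convexHull ℝ {A, B, C} ⊆ {y : E2 | H ≤ ⟪N, y⟫} := by
      apply convexHull_min
      · rintro x (rfl | rfl | rfl) <;> assumption
      · exact convex_halfSpace_ge (hlin N) H
    exact this hy
  have hsub1 : ∀ y ∈ Δ, ⟪N1, y⟫ ≤ H1 :=
    hhalf N1 H1 (le_of_eq hH1.symm) (le_of_eq hN1B) (by rw [hN1C]; linarith [sq_nonneg s])
  have hsub2 : ∀ y ∈ Δ, ⟪N2, y⟫ ≤ H2 :=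
    hhalf N2 H2 (by rw [hN2A]; linarith [sq_nonneg s]) (le_of_eq hH2.symm) (le_of_eq hN2C)
  have hsub3 : ∀ y ∈ Δ, ⟪N3, y⟫ ≤ H3 :=
    hhalf N3 H3 (le_of_eq hN3A) (by rw [hN3B]; linarith [sq_nonneg s]) (le_of_eq hH3.symm)
  have hsub1' : ∀ y ∈ Δ, H1 - 3*s^2/2 ≤ ⟪N1, y⟫ :=
    hhalfge N1 (H1 - 3*s^2/2) (by linarith [sq_nonneg s, hH1]) (by rw [hN1B]; linarith [sq_nonneg s])
      (le_of_eq hN1C.symm)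
  -- F3 : interior is strictly inside each halfplane
  have hint : ∀ (N : E2) (H : ℝ), ⟪N, N⟫ = 3*s^2 → (∀ y ∈ Δ, ⟪N, y⟫ ≤ H) →
      ∀ x ∈ interior Δ, ⟪N, x⟫ < H := by
    intro N H hNN hsub x hx
    have hNpos : (0:ℝ) < ⟪N, N⟫ := by rw [hNN]; positivity
    have hNne : N ≠ 0 := by
      intro h0
      rw [h0] at hNpos
      simp at hNpos
    have hNnorm : 0 < ‖N‖ := norm_pos_iff.2 hNne
    rw [mem_interior_iff_mem_nhds, Metric.mem_nhds_iff] at hx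
    obtain ⟨ε, hε, hball⟩ := hx
    set δ := ε / (2 * ‖N‖) with hδ
    have hδpos : 0 < δ := by rw [hδ]; positivity
    have hmem : x + δ • N ∈ Δ := by
      apply hball
      rw [Metric.mem_ball, dist_eq_norm]
      have : x + δ • N - x = δ • N := by abel
      rw [this, norm_smul, Real.norm_eq_abs, abs_of_pos hδpos, hδ]
      have h2 : ε / (2 * ‖N‖) * ‖N‖ = ε / 2 := by
        field_simp
      rw [h2]
      linarith
    have hle := hsub _ hmem
    rw [inner_add_right, real_inner_smul_right, hNN] at hle
    have hpos2 : 0 < δ * (3*s^2) := by positivity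
    linarith
  have hint1 : ∀ x ∈ interior Δ, ⟪N1, x⟫ < H1 := hint N1 H1 g11 hsub1
  have hint2 : ∀ x ∈ interior Δ, ⟪N2, x⟫ < H2 := hint N2 H2 g22 hsub2
  have hint3 : ∀ x ∈ interior Δ, ⟪N3, x⟫ < H3 := hint N3 H3 g33 hsub3
  have hN3' : N3 = -N1 - N2 := by rw [hN3, hN1, hN2]; module
  -- F2 : strict halfplanes are inside the triangle
  have hF2 : ∀ x : E2, ⟪N1, x⟫ < H1 → ⟪N2, x⟫ < H2 → ⟪N3, x⟫ < H3 → x ∈ Δ := by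
    intro x hx1 hx2 hx3
    by_contra hx
    obtain ⟨f, u, hfu, hux⟩ := geometric_hahn_banach_closed_point hconv hcomp.isClosed hx
    obtain ⟨w, hw⟩ : ∃ z : E2, z = (InnerProductSpace.toDual ℝ (EuclideanSpace ℝ (Fin 2))).symm f :=
      ⟨_, rfl⟩
    have hwy : ∀ y : E2, ⟪w, y⟫ = f y := by
      intro y; rw [hw]; exact InnerProductSpace.toDual_symm_apply
    obtain ⟨α, β, hαβ⟩ := rep_lemma n1 n2 hun1 hun2 hn12 w
    have main : ∀ (μ ν : ℝ) (Na Nb : E2) (Ha Hb : ℝ) (V : E2), 0 ≤ μ → 0 ≤ ν →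
        w = μ • Na + ν • Nb → ⟪Na, x⟫ < Ha → ⟪Nb, x⟫ < Hb →
        ⟪Na, V⟫ = Ha → ⟪Nb, V⟫ = Hb → V ∈ Δ → False := by
      intro μ ν Na Nb Ha Hb V hμ hν hrep hax hbx haV hbV hV
      have hwx : ⟪w, x⟫ ≤ ⟪w, V⟫ := by
        rw [hrep, inner_add_left, inner_add_left, real_inner_smul_left, real_inner_smul_left,
          real_inner_smul_left, real_inner_smul_left, haV, hbV]
        have t1 := mul_le_mul_of_nonneg_left (le_of_lt hax) hμ
        have t2 := mul_le_mul_of_nonneg_left (le_of_lt hbx) hν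
        linarith
      have h2 : f V < f x := lt_trans (hfu V hV) hux
      rw [← hwy, ← hwy] at h2
      linarith
    have hwrep : w = (α * κ) • N1 + (β * κ) • N2 := by
      rw [hαβ, hn1, hn2, smul_smul, smul_smul]
    rcases le_total 0 (α * κ) with ha | ha <;> rcases le_total 0 (β * κ) with hb | hb
    · exact main (α*κ) (β*κ) N1 N2 H1 H2 B ha hb hwrep hx1 hx2 hN1B hH2.symm hBmem
    · refine main (α*κ - β*κ) (-(β*κ)) N1 N3 H1 H3 A (by linarith) (by linarith) ?_ hx1 hx3
        hH1.symm hN3A hAmem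
      rw [hwrep, hN3']; module
    · refine main (β*κ - α*κ) (-(α*κ)) N2 N3 H2 H3 C (by linarith) (by linarith) ?_ hx2 hx3
        hN2C hH3.symm hCmem
      rw [hwrep, hN3']; module
    · rcases le_total (α*κ) (β*κ) with hab2 | hab2
      · refine main (β*κ - α*κ) (-(α*κ)) N2 N3 H2 H3 C (by linarith) (by linarith) ?_ hx2 hx3
          hN2C hH3.symm hCmem
        rw [hwrep, hN3']; module
      · refine main (α*κ - β*κ) (-(β*κ)) N1 N3 H1 H3 A (by linarith) (by linarith) ?_ hx1 hx3
          hH1.symm hN3A hAmem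
        rw [hwrep, hN3']; module
  -- open strict region inside interior
  have hTo : ∀ x : E2, ⟪N1, x⟫ < H1 → ⟪N2, x⟫ < H2 → ⟪N3, x⟫ < H3 → x ∈ interior Δ := by
    intro x hx1 hx2 hx3
    have hc : ∀ N : E2, Continuous (fun y : E2 => ⟪N, y⟫) :=
      fun N => Continuous.inner continuous_const continuous_id
    have hopen : IsOpen {y : E2 | ⟪N1,y⟫ < H1 ∧ (⟪N2,y⟫ < H2 ∧ ⟪N3,y⟫ < H3)} :=
      ((isOpen_lt (hc N1) continuous_const).and
        ((isOpen_lt (hc N2) continuous_const).and (isOpen_lt (hc N3) continuous_const)))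
    exact interior_maximal (fun y hy => hF2 y hy.1 hy.2.1 hy.2.2) hopen ⟨hx1, hx2, hx3⟩
  have g21 : ⟪N2, N1⟫ = -(3*s^2)/2 := by rw [real_inner_comm]; exact g12
  have g31 : ⟪N3, N1⟫ = -(3*s^2)/2 := by rw [real_inner_comm]; exact g13
  have g32 : ⟪N3, N2⟫ = -(3*s^2)/2 := by rw [real_inner_comm]; exact g23
  -- lower bound for elements of the xiB defining set
  have hlow : ∀ ℓ : ℝ, (∃ m : ℕ, 2 ≤ m ∧ ∃ q : ℕ → EuclideanSpace ℝ (Fin 2),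
      NotTranslatableInto m q Δ ∧
      ℓ = ∑ i ∈ Finset.range m, ‖q ((i + 1) % m) - q i‖) → 3*s/2 ≤ ℓ := by
    rintro ℓ ⟨m, hm, q, hq, rfl⟩
    have hFr : (Finset.range m).Nonempty := by
      rw [Finset.nonempty_range_iff]; omega
    obtain ⟨j1, hj1mem, hj1max⟩ :=
      Finset.exists_max_image (Finset.range m) (fun i => ⟪N1, q i⟫) hFr
    obtain ⟨j2, hj2mem, hj2max⟩ :=
      Finset.exists_max_image (Finset.range m) (fun i => ⟪N2, q i⟫) hFr
    obtain ⟨j3, hj3mem, hj3max⟩ :=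
      Finset.exists_max_image (Finset.range m) (fun i => ⟪N3, q i⟫) hFr
    rw [Finset.mem_range] at hj1mem hj2mem hj3mem
    have hM : 3*s^2/2 ≤ ⟪N1, q j1⟫ + ⟪N2, q j2⟫ + ⟪N3, q j3⟫ := by
      by_contra hcon
      push_neg at hcon
      obtain ⟨c1, hc1⟩ : ∃ x : ℝ, x = H1 - ⟪N1, q j1⟫ := ⟨_, rfl⟩
      obtain ⟨c2, hc2⟩ : ∃ x : ℝ, x = H2 - ⟪N2, q j2⟫ := ⟨_, rfl⟩
      obtain ⟨c3, hc3⟩ : ∃ x : ℝ, x = H3 - ⟪N3, q j3⟫ := ⟨_, rfl⟩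
      have hcsum : 0 < c1 + c2 + c3 := by rw [hc1, hc2, hc3]; linarith [hHsum]
      obtain ⟨t, htdef⟩ : ∃ z : E2, z = (2/(9*s^2)) • (c1 • N1 + c2 • N2 + c3 • N3) :=
        ⟨_, rfl⟩
      obtain ⟨i, him, hni⟩ := hq t
      apply hni
      apply hTo
      · have hqi : ⟪N1, q i⟫ ≤ ⟪N1, q j1⟫ := hj1max i (Finset.mem_range.2 him)
        have ht1 : ⟪N1, t⟫ = c1 - (c1+c2+c3)/3 := by
          rw [htdef, real_inner_smul_right, inner_add_right, inner_add_right,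
            real_inner_smul_right, real_inner_smul_right, real_inner_smul_right,
            g11, g12, g13]
          field_simp
          ring
        rw [inner_add_right, ht1]
        rw [hc1] at hcsum ⊢
        linarith
      · have hqi : ⟪N2, q i⟫ ≤ ⟪N2, q j2⟫ := hj2max i (Finset.mem_range.2 him)
        have ht2 : ⟪N2, t⟫ = c2 - (c1+c2+c3)/3 := by
          rw [htdef, real_inner_smul_right, inner_add_right, inner_add_right,
            real_inner_smul_right, real_inner_smul_right, real_inner_smul_right,
            g21, g22, g23]
          field_simp
          ring
        rw [inner_add_right, ht2]
        rw [hc2] at hcsum ⊢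
        linarith
      · have hqi : ⟪N3, q i⟫ ≤ ⟪N3, q j3⟫ := hj3max i (Finset.mem_range.2 him)
        have ht3 : ⟪N3, t⟫ = c3 - (c1+c2+c3)/3 := by
          rw [htdef, real_inner_smul_right, inner_add_right, inner_add_right,
            real_inner_smul_right, real_inner_smul_right, real_inner_smul_right,
            g31, g32, g33]
          field_simp
          ring
        rw [inner_add_right, ht3]
        rw [hc3] at hcsum ⊢
        linarith
    have hper := cyclic_three q hj1mem hj2mem hj3mem
    have hkey := key_ineq n1 n2 n3 hun1 hun2 hun3 hn12 hn23 hn31 hnsum (q j1) (q j2) (q j3)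
    have e1 : ⟪n1, q j1⟫ = κ * ⟪N1, q j1⟫ := by rw [hn1, real_inner_smul_left]
    have e2 : ⟪n2, q j2⟫ = κ * ⟪N2, q j2⟫ := by rw [hn2, real_inner_smul_left]
    have e3 : ⟪n3, q j3⟫ = κ * ⟪N3, q j3⟫ := by rw [hn3, real_inner_smul_left]
    rw [e1, e2, e3] at hkey
    have hchain : 3*s/2 ≤ Real.sqrt 3 *
        (κ * ⟪N1, q j1⟫ + κ * ⟪N2, q j2⟫ + κ * ⟪N3, q j3⟫) := by
      have hh1 : Real.sqrt 3 * (κ * ⟪N1, q j1⟫ + κ * ⟪N2, q j2⟫ + κ * ⟪N3, q j3⟫)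
          = s⁻¹ * (⟪N1, q j1⟫ + ⟪N2, q j2⟫ + ⟪N3, q j3⟫) := by
        rw [← hκ3]; ring
      have hh2 : s⁻¹ * (3*s^2/2) = 3*s/2 := by field_simp
      rw [hh1, ← hh2]
      exact mul_le_mul_of_nonneg_left hM (by positivity)
    linarith
  -- midpoints of the sides
  obtain ⟨P1, hP1⟩ : ∃ z : E2, z = midpoint ℝ A B := ⟨_, rfl⟩
  obtain ⟨P2, hP2⟩ : ∃ z : E2, z = midpoint ℝ B C := ⟨_, rfl⟩
  obtain ⟨P3, hP3⟩ : ∃ z : E2, z = midpoint ℝ C A := ⟨_, rfl⟩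
  have hmid : ∀ N X Y : E2, ⟪N, midpoint ℝ X Y⟫ = (⟪N,X⟫ + ⟪N,Y⟫)/2 := by
    intro N X Y
    rw [midpoint_eq_smul_add, real_inner_smul_right, inner_add_right, invOf_eq_inv]
    ring
  have hNP1 : ⟪N1, P1⟫ = H1 := by rw [hP1, hmid, ← hH1, hN1B]; ring
  have hNP2 : ⟪N2, P2⟫ = H2 := by rw [hP2, hmid, ← hH2, hN2C]; ring
  have hNP3 : ⟪N3, P3⟫ = H3 := by rw [hP3, hmid, ← hH3, hN3A]; ring
  have hd12 : dist P1 P2 = s/2 := by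
    have hv : P1 - P2 = (2⁻¹ : ℝ) • (A - C) := by
      rw [hP1, hP2, midpoint_eq_smul_add, midpoint_eq_smul_add, invOf_eq_inv]
      module
    rw [dist_eq_norm, hv, norm_smul, norm_sub_rev, hsCA, Real.norm_eq_abs,
      abs_of_pos (by norm_num : (0:ℝ) < 2⁻¹)]
    ring
  have hd23 : dist P2 P3 = s/2 := by
    have hv : P2 - P3 = (2⁻¹ : ℝ) • (B - A) := by
      rw [hP2, hP3, midpoint_eq_smul_add, midpoint_eq_smul_add, invOf_eq_inv]
      module
    rw [dist_eq_norm, hv, norm_smul, norm_sub_rev, hsAB, Real.norm_eq_abs,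
      abs_of_pos (by norm_num : (0:ℝ) < 2⁻¹)]
    ring
  have hd31 : dist P3 P1 = s/2 := by
    have hv : P3 - P1 = (2⁻¹ : ℝ) • (C - B) := by
      rw [hP3, hP1, midpoint_eq_smul_add, midpoint_eq_smul_add, invOf_eq_inv]
      module
    rw [dist_eq_norm, hv, norm_smul, norm_sub_rev, hsBC, Real.norm_eq_abs,
      abs_of_pos (by norm_num : (0:ℝ) < 2⁻¹)]
    ring
  obtain ⟨qm, hqm⟩ : ∃ F : ℕ → E2,
      F = (fun n => if n % 3 = 0 then P1 else if n % 3 = 1 then P2 else P3) := ⟨_, rfl⟩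
  have hq0 : qm 0 = P1 := by rw [hqm]; norm_num
  have hq1 : qm 1 = P2 := by rw [hqm]; norm_num
  have hq2 : qm 2 = P3 := by rw [hqm]; norm_num
  have hNT : NotTranslatableInto 3 qm Δ := by
    intro t
    by_contra hcon
    push_neg at hcon
    have k0 := hint1 _ (hcon 0 (by norm_num))
    have k1 := hint2 _ (hcon 1 (by norm_num))
    have k2 := hint3 _ (hcon 2 (by norm_num))
    rw [hq0, inner_add_right, hNP1] at k0
    rw [hq1, inner_add_right, hNP2] at k1
    rw [hq2, inner_add_right, hNP3] at k2
    have hz : ⟪N1,t⟫ + ⟪N2,t⟫ + ⟪N3,t⟫ = 0 := by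
      have h := hNsum
      have h0 : ⟪N1 + N2 + N3, t⟫ = 0 := by rw [h]; simp
      rw [inner_add_left, inner_add_left] at h0
      linarith
    linarith
  have hsum3 : ∑ i ∈ Finset.range 3, ‖qm ((i + 1) % 3) - qm i‖ = 3*s/2 := by
    rw [Finset.sum_range_succ, Finset.sum_range_succ, Finset.sum_range_one]
    norm_num [hq0, hq1, hq2]
    have d1 : ‖P2 - P1‖ = s/2 := by rw [← dist_eq_norm, dist_comm]; exact hd12
    have d2 : ‖P3 - P2‖ = s/2 := by rw [← dist_eq_norm, dist_comm]; exact hd23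
    have d3 : ‖P1 - P3‖ = s/2 := by rw [← dist_eq_norm, dist_comm]; exact hd31
    rw [d1, d2, d3]
    ring
  have hmem_xi : (3*s/2) ∈ {ℓ : ℝ | ∃ m : ℕ, 2 ≤ m ∧ ∃ q : ℕ → EuclideanSpace ℝ (Fin 2),
      NotTranslatableInto m q Δ ∧
      ℓ = ∑ i ∈ Finset.range m, ‖q ((i + 1) % m) - q i‖} :=
    ⟨3, by norm_num, qm, hNT, hsum3.symm⟩
  have hxiB : xiB Δ = 3*s/2 := by
    unfold xiB
    exact le_antisymm (csInf_le ⟨3*s/2, fun ℓ hℓ => hlow ℓ hℓ⟩ hmem_xi)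
      (le_csInf ⟨_, hmem_xi⟩ hlow)
  -- width: membership with p = n1
  have hcont : ∀ p : E2, Continuous (fun y : E2 => ⟪p, y⟫) :=
    fun p => Continuous.inner continuous_const continuous_id
  have himg_max : IsGreatest ((fun y => ⟪n1, y⟫) '' Δ) (κ * H1) := by
    constructor
    · exact ⟨A, hAmem, by simp only; rw [hn1, real_inner_smul_left, ← hH1]⟩
    · rintro x ⟨y, hy, rfl⟩
      simp only
      rw [hn1, real_inner_smul_left]
      exact mul_le_mul_of_nonneg_left (hsub1 y hy) (le_of_lt hκpos)
  have himg_min : IsLeast ((fun y => ⟪n1, y⟫) '' Δ) (κ * (H1 - 3*s^2/2)) := by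
    constructor
    · exact ⟨C, hCmem, by simp only; rw [hn1, real_inner_smul_left, hN1C]⟩
    · rintro x ⟨y, hy, rfl⟩
      simp only
      rw [hn1, real_inner_smul_left]
      exact mul_le_mul_of_nonneg_left (hsub1' y hy) (le_of_lt hκpos)
  have hκval : κ * H1 - κ * (H1 - 3*s^2/2) = Real.sqrt 3 * s / 2 := by
    have e : κ * H1 - κ * (H1 - 3*s^2/2) = κ * (3*s^2/2) := by ring
    have hne : Real.sqrt 3 * s ≠ 0 := by positivity
    have e2 : κ * (3*s^2/2) = Real.sqrt 3 * s / 2 := by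
      rw [hκ, inv_mul_eq_div, div_eq_div_iff hne (by norm_num : (2:ℝ) ≠ 0)]
      first
        | linear_combination (-(s^2)) * hs3
        | linear_combination s^2 * hs3
        | nlinarith [hs3, sq_nonneg s]
    rw [e, e2]
  have hwelem : Real.sqrt 3 * s / 2 ∈ {w : ℝ | ∃ p : EuclideanSpace ℝ (Fin 2), ‖p‖ = 1 ∧
      w = sSup ((fun y => ⟪p, y⟫) '' Δ) - sInf ((fun y => ⟪p, y⟫) '' Δ)} := by
    refine ⟨n1, hun1, ?_⟩
    rw [himg_max.csSup_eq, himg_min.csInf_eq, hκval]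
  -- width: lower bound
  have hwlow : ∀ w ∈ {w : ℝ | ∃ p : EuclideanSpace ℝ (Fin 2), ‖p‖ = 1 ∧
      w = sSup ((fun y => ⟪p, y⟫) '' Δ) - sInf ((fun y => ⟪p, y⟫) '' Δ)},
      Real.sqrt 3 * s / 2 ≤ w := by
    rintro w ⟨p, hp, rfl⟩
    obtain ⟨u1, hu1⟩ : ∃ z : E2, z = s⁻¹ • (B - A) := ⟨_, rfl⟩
    obtain ⟨u2, hu2⟩ : ∃ z : E2, z = s⁻¹ • (C - B) := ⟨_, rfl⟩
    have hspos : 0 < s⁻¹ := by positivity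
    have hnu1 : ‖u1‖ = 1 := by
      rw [hu1, norm_smul, norm_sub_rev, hsAB, Real.norm_eq_abs, abs_of_pos hspos]
      field_simp
    have hnu2 : ‖u2‖ = 1 := by
      rw [hu2, norm_smul, norm_sub_rev, hsBC, Real.norm_eq_abs, abs_of_pos hspos]
      field_simp
    have hu12 : ⟪u1, u2⟫ = -(1/2) := by
      rw [hu1, hu2, real_inner_smul_left, real_inner_smul_right, hBACB]
      field_simp
    have hu3 : -u1 - u2 = s⁻¹ • (A - C) := by rw [hu1, hu2]; module
    have hframe := frame_identity u1 u2 hnu1 hnu2 hu12 p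
    rw [hp] at hframe
    have hframe2 : ⟪u1,p⟫^2 + ⟪u2,p⟫^2 + ⟪-u1-u2,p⟫^2 = 3/2 := by rw [hframe]; norm_num
    have hzero : ⟪u1,p⟫ + ⟪u2,p⟫ + ⟪-u1-u2,p⟫ = 0 := by
      rw [inner_sub_left, inner_neg_left]; ring
    have hmax := maxsq _ _ _ hzero hframe2
    have hbddA : BddAbove ((fun y => ⟪p, y⟫) '' Δ) := (hcomp.image (hcont p)).bddAbove
    have hbddB : BddBelow ((fun y => ⟪p, y⟫) '' Δ) := (hcomp.image (hcont p)).bddBelow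
    have hfin : ∀ V W : E2, V ∈ Δ → W ∈ Δ → (3:ℝ)/4 ≤ (⟪s⁻¹ • (V - W), p⟫)^2 →
        Real.sqrt 3 * s / 2 ≤
          sSup ((fun y => ⟪p, y⟫) '' Δ) - sInf ((fun y => ⟪p, y⟫) '' Δ) := by
      intro V W hV hW hsq
      have habs : Real.sqrt 3 * s / 2 ≤ |⟪V - W, p⟫| := by
        rw [real_inner_smul_left] at hsq
        have h4 := Real.sqrt_le_sqrt hsq
        rw [Real.sqrt_sq_eq_abs] at h4
        have h5 : Real.sqrt (3/4) = Real.sqrt 3 / 2 := by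
          rw [show (3:ℝ)/4 = 3 / 2^2 by norm_num, Real.sqrt_div (by norm_num : (0:ℝ) ≤ 3),
            Real.sqrt_sq (by norm_num : (0:ℝ) ≤ 2)]
        rw [h5, abs_mul, abs_of_pos hspos] at h4
        have hX : s * (s⁻¹ * |⟪V - W, p⟫|) = |⟪V - W, p⟫| := by
          field_simp
        have h6 := mul_le_mul_of_nonneg_left h4 (le_of_lt hpos)
        rw [hX] at h6
        calc Real.sqrt 3 * s / 2 = s * (Real.sqrt 3 / 2) := by ring
          _ ≤ |⟪V - W, p⟫| := h6
      have hVW : ⟪V - W, p⟫ = ⟪p, V⟫ - ⟪p, W⟫ := by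
        rw [inner_sub_left, real_inner_comm p V, real_inner_comm p W]
      have hsupV : ⟪p, V⟫ ≤ sSup ((fun y => ⟪p, y⟫) '' Δ) := le_csSup hbddA ⟨V, hV, rfl⟩
      have hsupW : ⟪p, W⟫ ≤ sSup ((fun y => ⟪p, y⟫) '' Δ) := le_csSup hbddA ⟨W, hW, rfl⟩
      have hinfV : sInf ((fun y => ⟪p, y⟫) '' Δ) ≤ ⟪p, V⟫ := csInf_le hbddB ⟨V, hV, rfl⟩
      have hinfW : sInf ((fun y => ⟪p, y⟫) '' Δ) ≤ ⟪p, W⟫ := csInf_le hbddB ⟨W, hW, rfl⟩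
      rcases abs_cases ⟪V - W, p⟫ with ⟨he, _⟩ | ⟨he, _⟩
      · rw [he] at habs
        linarith
      · rw [he] at habs
        linarith
    rcases hmax with h | h | h
    · exact hfin B A hBmem hAmem (by rw [← hu1]; exact h)
    · exact hfin C B hCmem hBmem (by rw [← hu2]; exact h)
    · exact hfin A C hAmem hCmem (by rw [← hu3]; exact h)
  have hwidthB : widthB Δ = Real.sqrt 3 * s / 2 := by
    unfold widthB
    exact le_antisymm (csInf_le ⟨Real.sqrt 3 * s / 2, hwlow⟩ hwelem)
      (le_csInf ⟨_, hwelem⟩ hwlow)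
  -- conclusion
  rw [← hΔ]
  constructor
  · rw [hxiB, hwidthB]
    linear_combination (-(s/2)) * hs3
  · rw [hwidthB, ← hP1, ← hP2, ← hP3, hd12, hd23, hd31]
    linear_combination (-(s/2)) * hs3
end

section
/- Let K ⊂ ℝⁿ be a convex body whose center of gravity (centroid with respect to Lebesgue measure) is at the origin. Then −K ⊆ n·K, and consequently the difference body satisfies K − K ⊆ (n+1)·K. -/
open scoped RealInnerProductSpace Pointwise
open MeasureTheory

open Filter Topology in
private lemma key_ineq_s6 {n : ℕ} {K : Set (EuclideanSpace ℝ (Fin n))}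
    (hcomp : IsCompact K) (hconv : Convex ℝ K)
    (hVpos : 0 < (volume K).toReal)
    (hcent : (∫ y in K, y ∂volume) = 0)
    (f : EuclideanSpace ℝ (Fin n) →L[ℝ] ℝ) {x : EuclideanSpace ℝ (Fin n)} (hx : x ∈ K) :
    -f x ≤ n * sSup (f '' K) := by
  set M : ℝ := sSup (f '' K) with hM
  set V : ℝ := (volume K).toReal with hV
  have hfle : ∀ y ∈ K, f y ≤ M := fun y hy =>
    le_csSup (hcomp.image f.continuous).bddAbove ⟨y, hy, rfl⟩
  have hxM : f x ≤ M := hfle x hx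
  have hid_int : IntegrableOn (fun y : EuclideanSpace ℝ (Fin n) => y) K volume :=
    continuous_id.continuousOn.integrableOn_compact hcomp
  have hf_int : IntegrableOn (fun y => f y) K volume :=
    f.continuous.continuousOn.integrableOn_compact hcomp
  have hconst_int : ∀ r : ℝ, IntegrableOn (fun _ => r) K volume := fun r =>
    integrableOn_const hcomp.measure_lt_top.ne
  have hIf : (∫ y in K, f y ∂volume) = 0 := by
    have h := f.integral_comp_comm (μ := volume.restrict K) hid_int
    rw [hcent] at h
    simpa using h
  set g : EuclideanSpace ℝ (Fin n) → ℝ := fun y => f y - f x with hg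
  have hg_int : IntegrableOn g K volume := hf_int.sub (hconst_int (f x))
  have hIg : (∫ y in K, g y ∂volume) = -f x * V := by
    rw [hg]
    rw [integral_sub hf_int (hconst_int (f x)), hIf, setIntegral_const]
    simp [hV]
    rw [Measure.real]
    ring
  have hgeom : ∀ (s : ℝ) (k : ℕ), 1 - s^k = (∑ i ∈ Finset.range k, s^i) * (1 - s) := by
    intro s k
    calc 1 - s^k = -(s^k - 1) := by ring
      _ = -((∑ i ∈ Finset.range k, s^i) * (s - 1)) := by rw [geom_sum_mul]
      _ = (∑ i ∈ Finset.range k, s^i) * (1 - s) := by ring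
  have main : ∀ s : ℝ, s ∈ Set.Ioo (0:ℝ) 1 →
      (∑ i ∈ Finset.range (n+1), s^i) * (-f x) ≤ (∑ i ∈ Finset.range n, s^i) * (M - f x) := by
    intro s hs
    obtain ⟨hs0, hs1⟩ := hs
    set c : EuclideanSpace ℝ (Fin n) := x - s • x with hc
    set L : Set (EuclideanSpace ℝ (Fin n)) := (fun y => s • y + c) '' K with hLdef
    have hφK : ∀ y ∈ K, s • y + c ∈ K := by
      intro y hy
      have h := hconv hx hy (by linarith : (0:ℝ) ≤ 1 - s) hs0.le (by ring)
      convert h using 1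
      rw [hc]
      module
    have hLK : L ⊆ K := by rintro _ ⟨y, hy, rfl⟩; exact hφK y hy
    have hLcomp : IsCompact L := hcomp.image ((continuous_const_smul s).add continuous_const)
    have hLmeas : MeasurableSet L := hLcomp.isClosed.measurableSet
    have hL2 : L = (fun z => z + c) '' (s • K) := by
      rw [hLdef, ← Set.image_smul, Set.image_image]
    have hvolL : volume L = ENNReal.ofReal (s ^ n) * volume K := by
      rw [hL2]
      simp [Set.image_add_right, measure_preimage_add_right, Measure.addHaar_smul,
        finrank_euclideanSpace_fin, abs_of_pos (pow_pos hs0 n)]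
    have hvolLr : (volume L).toReal = s ^ n * V := by
      rw [hvolL, ENNReal.toReal_mul, ENNReal.toReal_ofReal (by positivity), hV]
    have hintL : (∫ z in L, g z ∂volume) = s ^ (n+1) * (-f x * V) := by
      have h1 : (∫ z in L, g z ∂volume) = ∫ y in s • K, g (y + c) ∂volume := by
        rw [hL2]
        exact (measurePreserving_add_right volume c).setIntegral_image_emb
          (measurableEmbedding_addRight c) _ _
      have h3 : (∫ y in K, g (s • y + c) ∂volume) = s * (-f x * V) := by
        have hgy : ∀ y : EuclideanSpace ℝ (Fin n), g (s • y + c) = s * g y := by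
          intro y
          rw [hg, hc]
          simp only [map_add, map_sub, ContinuousLinearMap.map_smul, smul_eq_mul]
          ring
        simp only [hgy]
        rw [integral_const_mul, hIg]
      have h2 : (∫ y in K, g (s • y + c) ∂volume)
          = (s ^ n)⁻¹ • ∫ y in s • K, g (y + c) ∂volume := by
        have h := Measure.setIntegral_comp_smul_of_pos volume (fun z => g (z + c)) K hs0
        rwa [finrank_euclideanSpace_fin] at h
      have hsn : (s:ℝ) ^ n ≠ 0 := by positivity
      rw [h3] at h2
      have h4 : (∫ y in s • K, g (y + c) ∂volume) = s ^ n * (s * (-f x * V)) := by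
        rw [h2, smul_eq_mul, ← mul_assoc, mul_inv_cancel₀ hsn, one_mul]
      rw [h1, h4]
      ring
    have hKmeas : MeasurableSet K := hcomp.isClosed.measurableSet
    have hdiff_int : (∫ z in K \ L, g z ∂volume) = (1 - s^(n+1)) * (-f x * V) := by
      rw [integral_diff hLmeas hg_int hLK, hIg, hintL]
      ring
    have hvoldiff : (volume (K \ L)).toReal = V - s ^ n * V := by
      rw [measure_diff hLK hLmeas.nullMeasurableSet hLcomp.measure_lt_top.ne,
        ENNReal.toReal_sub_of_le (measure_mono hLK) hcomp.measure_lt_top.ne, hvolLr, hV]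
    have hbound : (∫ z in K \ L, g z ∂volume) ≤ (M - f x) * ((1 - s^n) * V) := by
      calc (∫ z in K \ L, g z ∂volume) ≤ ∫ _ in K \ L, (M - f x) ∂volume := by
            apply setIntegral_mono_on (hg_int.mono_set Set.diff_subset)
              ((hconst_int _).mono_set Set.diff_subset) (hKmeas.diff hLmeas)
            intro z hz
            have := hfle z hz.1
            simp only [hg]
            linarith
        _ = (volume (K \ L)).toReal * (M - f x) := by
            rw [setIntegral_const]; rw [smul_eq_mul]; rfl
        _ = (M - f x) * ((1 - s^n) * V) := by rw [hvoldiff]; ring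
    have hineq : (1 - s^(n+1)) * (-f x * V) ≤ (M - f x) * ((1 - s^n) * V) := by
      rw [← hdiff_int]; exact hbound
    have hfac : (0:ℝ) < (1 - s) * V := mul_pos (by linarith) hVpos
    apply le_of_mul_le_mul_right _ hfac
    calc (∑ i ∈ Finset.range (n+1), s^i) * (-f x) * ((1 - s) * V)
        = (1 - s^(n+1)) * (-f x * V) := by rw [hgeom s (n+1)]; ring
      _ ≤ (M - f x) * ((1 - s^n) * V) := hineq
      _ = (∑ i ∈ Finset.range n, s^i) * (M - f x) * ((1 - s) * V) := by
          rw [hgeom s n]; ring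
  -- pass to the limit s → 1⁻
  have hc1 : Continuous fun s : ℝ => (∑ i ∈ Finset.range (n+1), s^i) * (-f x) := by
    fun_prop
  have hc2 : Continuous fun s : ℝ => (∑ i ∈ Finset.range n, s^i) * (M - f x) := by
    fun_prop
  have hval1 : (∑ i ∈ Finset.range (n+1), (1:ℝ)^i) * (-f x) = ((n:ℝ)+1) * (-f x) := by
    simp [Finset.sum_const]
  have hval2 : (∑ i ∈ Finset.range n, (1:ℝ)^i) * (M - f x) = (n:ℝ) * (M - f x) := by
    simp [Finset.sum_const]
  have ht1 : Tendsto (fun s : ℝ => (∑ i ∈ Finset.range (n+1), s^i) * (-f x)) (𝓝[<] (1:ℝ))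
      (𝓝 (((n:ℝ)+1) * (-f x))) := by
    rw [← hval1]
    exact (hc1.tendsto 1).mono_left nhdsWithin_le_nhds
  have ht2 : Tendsto (fun s : ℝ => (∑ i ∈ Finset.range n, s^i) * (M - f x)) (𝓝[<] (1:ℝ))
      (𝓝 ((n:ℝ) * (M - f x))) := by
    rw [← hval2]
    exact (hc2.tendsto 1).mono_left nhdsWithin_le_nhds
  have hev : ∀ᶠ s in 𝓝[<] (1:ℝ),
      (∑ i ∈ Finset.range (n+1), s^i) * (-f x) ≤ (∑ i ∈ Finset.range n, s^i) * (M - f x) :=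
    Filter.eventually_of_mem (Ioo_mem_nhdsLT_of_mem (Set.mem_Ioc.2 ⟨zero_lt_one, le_refl 1⟩)) main
  have hfin : ((n:ℝ)+1) * (-f x) ≤ (n:ℝ) * (M - f x) := le_of_tendsto_of_tendsto ht1 ht2 hev
  nlinarith [hfin]

private lemma mem_of_forall_dual_le {n : ℕ} {K : Set (EuclideanSpace ℝ (Fin n))}
    (hcomp : IsCompact K) (hconv : Convex ℝ K) (hne : K.Nonempty)
    {p : EuclideanSpace ℝ (Fin n)}
    (hp : ∀ f : EuclideanSpace ℝ (Fin n) →L[ℝ] ℝ, f p ≤ sSup (f '' K)) : p ∈ K := by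
  by_contra hpc
  obtain ⟨f, u, hfu, hup⟩ := geometric_hahn_banach_closed_point hconv hcomp.isClosed hpc
  have hMu : sSup (f '' K) ≤ u :=
    csSup_le (hne.image f) (by rintro _ ⟨a, ha, rfl⟩; exact (hfu a ha).le)
  linarith [hp f]


/-- If the centroid of a convex body `K ⊂ ℝⁿ` is at the origin, then `−K ⊆ n·K`, and
consequently `K − K ⊆ (n+1)·K`. -/
theorem neg_subset_smul_of_centroid_zero (n : ℕ) (K : Set (EuclideanSpace ℝ (Fin n)))
    (hK : IsConvexBody K)
    (hcent : (⨍ x in K, x ∂volume) = 0) :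
    -K ⊆ (n : ℝ) • K ∧ K - K ⊆ ((n : ℝ) + 1) • K := by
  obtain ⟨hcomp, hconv, hint⟩ := hK
  have hKne : K.Nonempty := hint.mono interior_subset
  have hVpos : 0 < (volume K).toReal := by
    refine ENNReal.toReal_pos ?_ hcomp.measure_lt_top.ne
    exact ((isOpen_interior.measure_pos volume hint).trans_le
      (measure_mono interior_subset)).ne'
  have hcent' : (∫ y in K, y ∂volume) = 0 := by
    rw [setAverage_eq] at hcent
    rcases smul_eq_zero.1 hcent with h | h
    · exact absurd h (inv_ne_zero hVpos.ne')
    · exact h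
  have key : ∀ (f : EuclideanSpace ℝ (Fin n) →L[ℝ] ℝ) (x), x ∈ K →
      -f x ≤ n * sSup (f '' K) := fun f x hx => key_ineq_s6 hcomp hconv hVpos hcent' f hx
  have part1 : -K ⊆ (n : ℝ) • K := by
    rcases Nat.eq_zero_or_pos n with hn | hn
    · subst hn
      intro z _
      obtain ⟨k, hk⟩ := hKne
      exact Set.mem_smul_set.2 ⟨k, hk, Subsingleton.elim _ _⟩
    · intro z hz
      have hxK : -z ∈ K := Set.mem_neg.1 hz
      have hnR : (0:ℝ) < n := by exact_mod_cast hn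
      have hp : (n:ℝ)⁻¹ • z ∈ K := by
        apply mem_of_forall_dual_le hcomp hconv hKne
        intro f
        have hk := key f (-z) hxK
        rw [map_neg, neg_neg] at hk
        rw [ContinuousLinearMap.map_smul, smul_eq_mul]
        rw [inv_mul_le_iff₀ hnR]
        exact hk
      exact Set.mem_smul_set.2 ⟨(n:ℝ)⁻¹ • z, hp, by
        rw [smul_smul, mul_inv_cancel₀ hnR.ne', one_smul]⟩
  refine ⟨part1, ?_⟩
  intro z hz
  rw [Set.mem_sub] at hz
  obtain ⟨a, ha, b, hb, rfl⟩ := hz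
  have hnb : -b ∈ (n : ℝ) • K := part1 (Set.neg_mem_neg.2 hb)
  obtain ⟨c, hc, hcb⟩ := Set.mem_smul_set.1 hnb
  have hn1 : ((n:ℝ)+1) ≠ 0 := by positivity
  refine Set.mem_smul_set.2 ⟨((n:ℝ)+1)⁻¹ • a + ((n:ℝ)*((n:ℝ)+1)⁻¹) • c, ?_, ?_⟩
  · refine hconv ha hc (by positivity) (by positivity) ?_
    field_simp
    ring
  · have h5 : ((n:ℝ)+1) • (((n:ℝ)+1)⁻¹ • a + ((n:ℝ)*((n:ℝ)+1)⁻¹) • c)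
        = a + (n:ℝ) • c := by
      rw [smul_add, smul_smul, smul_smul, mul_inv_cancel₀ hn1, one_smul]
      congr 1
      rw [show ((n:ℝ)+1) * ((n:ℝ)*((n:ℝ)+1)⁻¹) = (n:ℝ) by field_simp]
    rw [h5, hcb, ← sub_eq_add_neg]
end

section
/- If L ⊂ ℝⁿ is a convex body centrally symmetric with respect to the origin (L = −L), then ξ_B(L) = 2·w_B(L): the shortest closed billiard trajectory in L is a segment realizing the width, traversed back and forth. -/
open scoped RealInnerProductSpace Pointwise
open MeasureTheory

section Aux

lemma chain_norm {E : Type*} [NormedAddCommGroup E] (f : ℕ → E) {a b : ℕ} (h : a ≤ b) :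
    ‖f b - f a‖ ≤ ∑ j ∈ Finset.Ico a b, ‖f (j+1) - f j‖ := by
  induction b, h using Nat.le_induction with
  | base => simp
  | succ b hb ih =>
    rw [Finset.sum_Ico_succ_top hb]
    calc ‖f (b+1) - f a‖ ≤ ‖f (b+1) - f b‖ + ‖f b - f a‖ := norm_sub_le_norm_sub_add_norm_sub _ _ _
    _ ≤ (∑ j ∈ Finset.Ico a b, ‖f (j+1) - f j‖) + ‖f (b+1) - f b‖ := by linarith
    _ = _ := by ring

/-- A closed polygonal line is contained in a ball of radius a quarter of its length. -/
lemma exists_center {E : Type*} [NormedAddCommGroup E] [NormedSpace ℝ E]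
    (Q : ℕ → E) (m : ℕ) (hm : 1 ≤ m) (hQ : Q m = Q 0) :
    ∃ o : E, ∀ i < m, ‖Q i - o‖ ≤ (∑ j ∈ Finset.range m, ‖Q (j+1) - Q j‖) / 4 := by
  set d : ℕ → ℝ := fun j => ‖Q (j+1) - Q j‖ with hd
  set s : ℕ → ℝ := fun i => ∑ j ∈ Finset.range i, d j with hs
  set ℓ : ℝ := s m with hℓ
  have hchain : ∀ a b : ℕ, a ≤ b → ‖Q b - Q a‖ ≤ s b - s a := by
    intro a b hab
    rw [hs, ← Finset.sum_Ico_eq_sub _ hab]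
    exact chain_norm Q hab
  have hℓ0 : 0 ≤ ℓ := Finset.sum_nonneg (fun j _ => norm_nonneg _)
  set P : ℕ → Prop := fun j => s j ≤ ℓ/2 with hP
  set k : ℕ := Nat.findGreatest P (m-1) with hk
  have hk1 : k ≤ m - 1 := Nat.findGreatest_le _
  have hkm : k < m := lt_of_le_of_lt hk1 (by omega)
  have hks : s k ≤ ℓ/2 := Nat.findGreatest_spec (P := P) (Nat.zero_le _)
    (by show P 0; rw [hP]; show s 0 ≤ ℓ/2; simp only [hs, Finset.range_zero, Finset.sum_empty]; linarith)
  have hsucc : s (k+1) = s k + d k := Finset.sum_range_succ _ _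
  have hks2 : ℓ/2 ≤ s (k+1) := by
    rcases le_or_gt (k+1) (m-1) with h | h
    · have := Nat.findGreatest_is_greatest (Nat.lt_succ_self k) h
      exact (not_le.mp this).le
    · have : k + 1 = m := by omega
      rw [this]
      linarith
  have hdk0 : 0 ≤ d k := norm_nonneg _
  set c : ℝ := if d k = 0 then 0 else (ℓ/2 - s k) / d k with hc
  have hcd : c * d k = ℓ/2 - s k := by
    rcases eq_or_ne (d k) 0 with h | h
    · rw [hc, if_pos h, h]
      rw [h] at hsucc
      linarith
    · rw [hc, if_neg h, div_mul_cancel₀ _ h]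
  have hc0 : 0 ≤ c := by
    rcases eq_or_ne (d k) 0 with h | h
    · rw [hc, if_pos h]
    · rw [hc, if_neg h]
      apply div_nonneg (by linarith) hdk0
  have hc1 : c ≤ 1 := by
    rcases eq_or_ne (d k) 0 with h | h
    · rw [hc, if_pos h]; norm_num
    · rw [hc, if_neg h]
      rw [div_le_one (lt_of_le_of_ne hdk0 (Ne.symm h))]
      linarith
  set a : E := Q k + c • (Q (k+1) - Q k) with ha
  have ha1 : ‖a - Q k‖ = ℓ/2 - s k := by
    rw [ha, add_sub_cancel_left, norm_smul, Real.norm_eq_abs, abs_of_nonneg hc0]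
    exact hcd
  have ha2 : ‖Q (k+1) - a‖ = s (k+1) - ℓ/2 := by
    have : Q (k+1) - a = (1 - c) • (Q (k+1) - Q k) := by
      rw [ha, sub_smul, one_smul]
      abel
    rw [this, norm_smul, Real.norm_eq_abs, abs_of_nonneg (by linarith), sub_mul, one_mul]
    rw [show c * d k = ℓ/2 - s k from hcd]
    change d k - _ = _
    linarith
  refine ⟨(2⁻¹ : ℝ) • (Q 0 + a), fun i hi => ?_⟩
  have key : ‖Q i - Q 0‖ + ‖Q i - a‖ ≤ ℓ/2 := by
    rcases le_or_gt i k with h | h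
    · have h1 : ‖Q i - Q 0‖ ≤ s i - s 0 := hchain 0 i (Nat.zero_le _)
      have h0 : s 0 = 0 := by simp [hs]
      have h2 : ‖Q i - a‖ ≤ ‖Q i - Q k‖ + ‖Q k - a‖ := norm_sub_le_norm_sub_add_norm_sub _ _ _
      have h3 : ‖Q i - Q k‖ ≤ s k - s i := by
        rw [norm_sub_rev]; exact hchain i k h
      have h4 : ‖Q k - a‖ = ℓ/2 - s k := by rw [norm_sub_rev]; exact ha1
      linarith
    · have h1 : ‖Q i - a‖ ≤ ‖Q i - Q (k+1)‖ + ‖Q (k+1) - a‖ :=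
        norm_sub_le_norm_sub_add_norm_sub _ _ _
      have h2 : ‖Q i - Q (k+1)‖ ≤ s i - s (k+1) := hchain (k+1) i h
      have h3 : ‖Q i - Q 0‖ ≤ ℓ - s i := by
        rw [← hQ, norm_sub_rev]
        exact hchain i m hi.le
      linarith
  have hrw : Q i - (2⁻¹ : ℝ) • (Q 0 + a) = (2⁻¹ : ℝ) • ((Q i - Q 0) + (Q i - a)) := by
    module
  rw [hrw, norm_smul, Real.norm_eq_abs]
  have := norm_add_le (Q i - Q 0) (Q i - a)
  have h14 : |(2⁻¹:ℝ)| = 2⁻¹ := by norm_num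
  rw [h14]
  nlinarith [norm_nonneg (Q i - Q 0 + (Q i - a))]

variable {n : ℕ} {L : Set (EuclideanSpace ℝ (Fin n))}

lemma inner_cont (p : EuclideanSpace ℝ (Fin n)) :
    Continuous (fun q : EuclideanSpace ℝ (Fin n) => ⟪p, q⟫) :=
  continuous_const.inner continuous_id

lemma breadth_nonneg (hcomp : IsCompact L) (hne : L.Nonempty) (p : EuclideanSpace ℝ (Fin n)) :
    0 ≤ sSup ((fun q => ⟪p, q⟫) '' L) - sInf ((fun q => ⟪p, q⟫) '' L) := by
  obtain ⟨x, hx⟩ := hne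
  have himg : IsCompact ((fun q => ⟪p, q⟫) '' L) := hcomp.image (inner_cont p)
  have h1 : sInf ((fun q => ⟪p, q⟫) '' L) ≤ ⟪p, x⟫ :=
    csInf_le himg.bddBelow ⟨x, hx, rfl⟩
  have h2 : ⟪p, x⟫ ≤ sSup ((fun q => ⟪p, q⟫) '' L) :=
    le_csSup himg.bddAbove ⟨x, hx, rfl⟩
  linarith

lemma widthB_bddBelow (hcomp : IsCompact L) (hne : L.Nonempty) :
    (0:ℝ) ∈ lowerBounds {w : ℝ | ∃ p : EuclideanSpace ℝ (Fin n), ‖p‖ = 1 ∧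
      w = sSup ((fun q => ⟪p, q⟫) '' L) - sInf ((fun q => ⟪p, q⟫) '' L)} := by
  rintro w ⟨p, hp, rfl⟩
  exact breadth_nonneg hcomp hne p

/-- key separation lemma: points of norm < width/2 lie in the interior of `L`. -/
lemma ball_subset_interior (hcomp : IsCompact L) (hconv : Convex ℝ L) (hne : L.Nonempty)
    (hsymm : L = -L) :
    Metric.ball (0 : EuclideanSpace ℝ (Fin n)) (widthB L / 2) ⊆ interior L := by
  apply interior_maximal _ Metric.isOpen_ball
  intro x hx
  rw [Metric.mem_ball, dist_zero_right] at hx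
  by_contra hxL
  obtain ⟨f, u, hfu, hux⟩ := geometric_hahn_banach_closed_point hconv hcomp.isClosed hxL
  set v : EuclideanSpace ℝ (Fin n) := (InnerProductSpace.toDual ℝ _).symm f with hv
  have hfv : ∀ y, f y = ⟪v, y⟫ := fun y => (InnerProductSpace.toDual_symm_apply).symm
  have hvne : v ≠ 0 := by
    intro h0
    obtain ⟨a, ha⟩ := hne
    have h1 := hfu a ha
    rw [hfv a, h0] at h1
    rw [hfv x, h0] at hux
    simp at h1 hux
    linarith
  have hvpos : (0:ℝ) < ‖v‖ := norm_pos_iff.mpr hvne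
  set p : EuclideanSpace ℝ (Fin n) := ‖v‖⁻¹ • v with hp
  have hpnorm : ‖p‖ = 1 := by
    rw [hp, norm_smul, Real.norm_eq_abs, abs_of_nonneg (by positivity),
      inv_mul_cancel₀ (ne_of_gt hvpos)]
  have hinner : ∀ y, ⟪p, y⟫ = ‖v‖⁻¹ * ⟪v, y⟫ := fun y => real_inner_smul_left _ _ _
  have himg : IsCompact ((fun q => ⟪p, q⟫) '' L) := hcomp.image (inner_cont p)
  have hSup : sSup ((fun q => ⟪p, q⟫) '' L) ≤ ‖v‖⁻¹ * u := by
    apply csSup_le (hne.image _)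
    rintro b ⟨a, ha, rfl⟩
    show ⟪p, a⟫ ≤ ‖v‖⁻¹ * u
    rw [hinner a]
    have := hfu a ha
    rw [hfv a] at this
    have h2 : ‖v‖⁻¹ * ⟪v, a⟫ ≤ ‖v‖⁻¹ * u := by
      apply mul_le_mul_of_nonneg_left this.le (by positivity)
    exact h2
  have hInf : -(‖v‖⁻¹ * u) ≤ sInf ((fun q => ⟪p, q⟫) '' L) := by
    apply le_csInf (hne.image _)
    rintro b ⟨a, ha, rfl⟩
    have hna : -a ∈ L := by
      rw [hsymm]
      exact Set.neg_mem_neg.mpr ha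
    have := hfu (-a) hna
    rw [hfv (-a), inner_neg_right] at this
    show -(‖v‖⁻¹ * u) ≤ ⟪p, a⟫
    rw [hinner a]
    have h2 : ‖v‖⁻¹ * (-u) ≤ ‖v‖⁻¹ * ⟪v, a⟫ :=
      mul_le_mul_of_nonneg_left (by linarith) (by positivity)
    rw [mul_neg] at h2
    linarith
  have hw : widthB L ≤ sSup ((fun q => ⟪p, q⟫) '' L) - sInf ((fun q => ⟪p, q⟫) '' L) := by
    apply csInf_le ⟨0, widthB_bddBelow hcomp hne⟩
    exact ⟨p, hpnorm, rfl⟩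
  have hux' : u < ‖v‖ * ‖x‖ := by
    rw [hfv x] at hux
    calc u < ⟪v, x⟫ := hux
    _ ≤ ‖v‖ * ‖x‖ := real_inner_le_norm v x
  have : ‖v‖⁻¹ * u < ‖x‖ := by
    rw [inv_mul_lt_iff₀ hvpos]
    linarith [hux']
  linarith [hw, hSup, hInf, hx, this]

/-- strict inequalities for interior points. -/
lemma inner_lt_of_interior (hcomp : IsCompact L) {p : EuclideanSpace ℝ (Fin n)} (hp : ‖p‖ = 1)
    {y : EuclideanSpace ℝ (Fin n)} (hy : y ∈ interior L) :
    ⟪p, y⟫ < sSup ((fun q => ⟪p, q⟫) '' L) ∧ sInf ((fun q => ⟪p, q⟫) '' L) < ⟪p, y⟫ := by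
  obtain ⟨ε, hε, hball⟩ := Metric.isOpen_iff.mp isOpen_interior y hy
  have himg : IsCompact ((fun q => ⟪p, q⟫) '' L) := hcomp.image (inner_cont p)
  have hpp : ⟪p, p⟫ = 1 := by
    rw [real_inner_self_eq_norm_sq, hp]; norm_num
  have hmem : ∀ (c : ℝ), |c| < ε → y + c • p ∈ L := by
    intro c hc
    apply interior_subset (hball _)
    rw [Metric.mem_ball, dist_eq_norm, add_sub_cancel_left, norm_smul, Real.norm_eq_abs, hp,
      mul_one]
    exact hc
  have hval : ∀ (c : ℝ), ⟪p, y + c • p⟫ = ⟪p, y⟫ + c := by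
    intro c
    rw [inner_add_right, real_inner_smul_right, hpp, mul_one]
  constructor
  · have h1 : ⟪p, y⟫ + ε/2 ≤ sSup ((fun q => ⟪p, q⟫) '' L) := by
      rw [← hval (ε/2)]
      exact le_csSup himg.bddAbove ⟨_, hmem (ε/2) (by rw [abs_of_nonneg (by linarith)]; linarith), rfl⟩
    linarith
  · have h1 : sInf ((fun q => ⟪p, q⟫) '' L) ≤ ⟪p, y⟫ + (-(ε/2)) := by
      rw [← hval (-(ε/2))]
      exact csInf_le himg.bddBelow ⟨_, hmem (-(ε/2)) (by rw [abs_neg, abs_of_nonneg (by linarith)]; linarith), rfl⟩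
    linarith

/-- the back-and-forth segment in direction `p` witnesses membership in the `xiB` defining set. -/
lemma mem_xiB_set (hcomp : IsCompact L) (hne : L.Nonempty)
    {p : EuclideanSpace ℝ (Fin n)} (hp : ‖p‖ = 1) :
    2 * (sSup ((fun q => ⟪p, q⟫) '' L) - sInf ((fun q => ⟪p, q⟫) '' L)) ∈
      {ℓ : ℝ | ∃ m : ℕ, 2 ≤ m ∧ ∃ q : ℕ → EuclideanSpace ℝ (Fin n),
        NotTranslatableInto m q L ∧
        ℓ = ∑ i ∈ Finset.range m, ‖q ((i + 1) % m) - q i‖} := by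
  set w' : ℝ := sSup ((fun q => ⟪p, q⟫) '' L) - sInf ((fun q => ⟪p, q⟫) '' L) with hw'
  have hw'0 : 0 ≤ w' := breadth_nonneg hcomp hne p
  refine ⟨2, le_refl 2, fun i => if i = 0 then 0 else w' • p, ?_, ?_⟩
  · intro t
    by_contra hcon
    push_neg at hcon
    have h0 := hcon 0 (by norm_num)
    have h1 := hcon 1 (by norm_num)
    norm_num at h0
    simp only [if_neg one_ne_zero] at h1
    have hs0 := (inner_lt_of_interior hcomp hp h0).2
    have hs1 := (inner_lt_of_interior hcomp hp h1).1
    rw [inner_add_right, real_inner_smul_right] at hs1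
    have hpp : ⟪p, p⟫ = 1 := by
      rw [real_inner_self_eq_norm_sq, hp]; norm_num
    rw [hpp, mul_one] at hs1
    rw [hw'] at hs1
    linarith
  · rw [Finset.sum_range_succ, Finset.sum_range_succ, Finset.sum_range_zero]
    norm_num
    rw [norm_smul, Real.norm_eq_abs, hp, abs_of_nonneg hw'0, mul_one]
    ring

end Aux

/-- For a centrally symmetric convex body `L`, the shortest closed billiard trajectory
has length twice the width: `ξ_B(L) = 2 w_B(L)`. -/
theorem xiB_centrally_symmetric (n : ℕ) (L : Set (EuclideanSpace ℝ (Fin n)))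
    (hL : IsConvexBody L) (hsymm : L = -L) :
    xiB L = 2 * widthB L := by
  obtain ⟨hcomp, hconv, hint⟩ := hL
  have hne : L.Nonempty := hint.mono interior_subset
  rcases Nat.eq_zero_or_pos n with h0 | hn
  · -- degenerate case `n = 0`
    subst h0
    have hsub : Subsingleton (EuclideanSpace ℝ (Fin 0)) :=
      ⟨fun a b => by ext i; exact i.elim0⟩
    have hLuniv : interior L = Set.univ := by
      have : L = Set.univ := by
        obtain ⟨x, hx⟩ := hne
        apply Set.eq_univ_of_forall
        intro y
        rwa [Subsingleton.elim y x]
      rw [this, interior_univ]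
    have hxi : xiB L = 0 := by
      unfold xiB
      convert Real.sInf_empty using 2
      rw [Set.eq_empty_iff_forall_notMem]
      rintro ℓ ⟨m, hm, q, hq, -⟩
      obtain ⟨i, hi, hni⟩ := hq 0
      exact hni (by rw [hLuniv]; trivial)
    have hwidth : widthB L = 0 := by
      unfold widthB
      convert Real.sInf_empty using 2
      rw [Set.eq_empty_iff_forall_notMem]
      rintro w ⟨f, hf, -⟩
      rw [Subsingleton.elim f 0, norm_zero] at hf
      norm_num at hf
    rw [hxi, hwidth]
    ring
  · -- main case `n ≥ 1`
    set S : Set ℝ := {w : ℝ | ∃ p : EuclideanSpace ℝ (Fin n), ‖p‖ = 1 ∧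
      w = sSup ((fun q => ⟪p, q⟫) '' L) - sInf ((fun q => ⟪p, q⟫) '' L)} with hSdef
    set A : Set ℝ := {ℓ : ℝ | ∃ m : ℕ, 2 ≤ m ∧ ∃ q : ℕ → EuclideanSpace ℝ (Fin n),
      NotTranslatableInto m q L ∧
      ℓ = ∑ i ∈ Finset.range m, ‖q ((i + 1) % m) - q i‖} with hAdef
    have hAlb : (0:ℝ) ∈ lowerBounds A := by
      rintro ℓ ⟨m, hm, q, hq, rfl⟩
      exact Finset.sum_nonneg (fun i _ => norm_nonneg _)
    have hp₀ : ‖(EuclideanSpace.single (⟨0, hn⟩ : Fin n) (1:ℝ))‖ = 1 := by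
      rw [EuclideanSpace.norm_single]; norm_num
    have hSne : S.Nonempty := ⟨_, _, hp₀, rfl⟩
    have hAne : A.Nonempty := ⟨_, mem_xiB_set hcomp hne hp₀⟩
    have hxiA : xiB L = sInf A := rfl
    have hwS : widthB L = sInf S := rfl
    apply le_antisymm
    · -- upper bound
      apply le_of_forall_pos_le_add
      intro ε hε
      obtain ⟨w', hw'S, hw'lt⟩ := Real.lt_sInf_add_pos hSne (half_pos hε)
      obtain ⟨p, hpn, hw'eq⟩ := hw'S
      have hmem : 2 * w' ∈ A := hw'eq ▸ mem_xiB_set hcomp hne hpn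
      calc xiB L ≤ 2 * w' := csInf_le ⟨0, hAlb⟩ hmem
      _ ≤ 2 * (sInf S + ε/2) := by linarith
      _ = 2 * widthB L + ε := by rw [hwS]; ring
    · -- lower bound
      rw [hxiA]
      apply le_csInf hAne
      rintro ℓ ⟨m, hm, q, hq, rfl⟩
      set ℓ := ∑ i ∈ Finset.range m, ‖q ((i + 1) % m) - q i‖ with hℓdef
      by_contra hlt
      push_neg at hlt
      set Q : ℕ → EuclideanSpace ℝ (Fin n) := fun i => q (i % m) with hQdef
      have hQm : Q m = Q 0 := by simp [hQdef, Nat.mod_self]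
      have hsum : ℓ = ∑ j ∈ Finset.range m, ‖Q (j+1) - Q j‖ := by
        apply Finset.sum_congr rfl
        intro i hi
        rw [Finset.mem_range] at hi
        rw [hQdef]
        simp only []
        rw [Nat.mod_eq_of_lt hi]
      obtain ⟨o, ho⟩ := exists_center Q m (by omega) hQm
      obtain ⟨i, hi, hni⟩ := hq (-o)
      apply hni
      have h1 : ‖q i - o‖ ≤ ℓ/4 := by
        have h := ho i hi
        rw [← hsum] at h
        simpa [hQdef, Nat.mod_eq_of_lt hi] using h
      have h2 : q i - o ∈ Metric.ball (0 : EuclideanSpace ℝ (Fin n)) (widthB L / 2) := by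
        rw [Metric.mem_ball, dist_zero_right]
        have hℓ0 : 0 ≤ ℓ := Finset.sum_nonneg (fun j _ => norm_nonneg _)
        calc ‖q i - o‖ ≤ ℓ/4 := h1
        _ < widthB L / 2 := by linarith
      have := ball_subset_interior hcomp hconv hne hsymm h2
      rwa [sub_eq_add_neg] at this
end

section
/- Symmetry of the shortest billiard trajectory length: for convex bodies K, T ⊂ ℝⁿ, each containing the origin in its interior, ξ_T(K) = ξ_K(T). -/
open scoped RealInnerProductSpace Pointwise
open MeasureTheory

section Helpers

variable {n : ℕ} {K T : Set (EuclideanSpace ℝ (Fin n))} {v x p : EuclideanSpace ℝ (Fin n)}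

lemma suppNorm_bddAbove (hK : IsCompact K) (v : EuclideanSpace ℝ (Fin n)) :
    BddAbove ((fun p => ⟪p, v⟫) '' K) :=
  (hK.image (continuous_id.inner continuous_const)).bddAbove

lemma inner_le_suppNorm (hK : IsCompact K) (hp : p ∈ K) : ⟪p, v⟫ ≤ suppNorm K v :=
  le_csSup (suppNorm_bddAbove hK v) ⟨p, hp, rfl⟩

lemma suppNorm_exists_max (hK : IsCompact K) (hne : K.Nonempty) (v : EuclideanSpace ℝ (Fin n)) :
    ∃ p ∈ K, suppNorm K v = ⟪p, v⟫ ∧ ∀ y ∈ K, ⟪y, v⟫ ≤ ⟪p, v⟫ := by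
  obtain ⟨p, hpK, hmax⟩ := hK.exists_isMaxOn (f := fun p => (⟪p, v⟫ : ℝ)) hne ((continuous_id.inner continuous_const).continuousOn)
  refine ⟨p, hpK, ?_, fun y hy => hmax hy⟩
  refine IsGreatest.csSup_eq ⟨⟨p, hpK, rfl⟩, ?_⟩
  rintro _ ⟨y, hy, rfl⟩
  exact hmax hy

lemma suppNorm_nonneg (hK : IsCompact K) (h0 : (0:EuclideanSpace ℝ (Fin n)) ∈ K) :
    0 ≤ suppNorm K v := by
  have := inner_le_suppNorm (v := v) hK h0
  simpa using this

lemma suppNorm_smul (hK : IsCompact K) (hne : K.Nonempty) {c : ℝ} (hc : 0 ≤ c)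
    (v : EuclideanSpace ℝ (Fin n)) : suppNorm K (c • v) = c * suppNorm K v := by
  obtain ⟨p, hpK, hval, hmax⟩ := suppNorm_exists_max hK hne v
  have : suppNorm K (c • v) = ⟪p, c • v⟫ := by
    refine IsGreatest.csSup_eq ⟨⟨p, hpK, rfl⟩, ?_⟩
    rintro _ ⟨y, hy, rfl⟩
    simp only [real_inner_smul_right]
    exact mul_le_mul_of_nonneg_left (hmax y hy) hc
  rw [this, real_inner_smul_right, hval]

lemma inner_lt_suppNorm_of_mem_interior (hK : IsCompact K) (hx : x ∈ interior K) (hv : v ≠ 0) :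
    ⟪x, v⟫ < suppNorm K v := by
  obtain ⟨δ, hδ, hball⟩ := Metric.mem_nhds_iff.1 (mem_interior_iff_mem_nhds.1 hx)
  have hvn : (0:ℝ) < ‖v‖ := norm_pos_iff.2 hv
  set y := x + (δ / (2 * ‖v‖)) • v with hy
  have hyK : y ∈ K := by
    apply hball
    simp only [Metric.mem_ball, hy, dist_self_add_left, norm_smul, Real.norm_eq_abs]
    rw [abs_of_pos (by positivity)]
    have h : δ / (2 * ‖v‖) * ‖v‖ = δ / 2 := by field_simp
    rw [h]; linarith
  have h1 : ⟪y, v⟫ = ⟪x, v⟫ + (δ / (2 * ‖v‖)) * ‖v‖^2 := by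
    rw [hy, inner_add_left, real_inner_smul_left, real_inner_self_eq_norm_sq]
  have h2 : (0:ℝ) < (δ / (2 * ‖v‖)) * ‖v‖^2 := by positivity
  have := inner_le_suppNorm (v := v) hK hyK
  linarith

lemma sum_shift {M : Type*} [AddCommMonoid M] (F : ℕ → M) {m : ℕ} (hm : 0 < m) :
    ∑ j ∈ Finset.range m, F ((j + 1) % m) = ∑ j ∈ Finset.range m, F j := by
  obtain ⟨k, rfl⟩ : ∃ k, m = k + 1 := ⟨m - 1, by omega⟩
  rw [Finset.sum_range_succ, Finset.sum_range_succ' F k, Nat.mod_self]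
  congr 1
  apply Finset.sum_congr rfl
  intro j hj
  rw [Nat.mod_eq_of_lt (by simp at hj; omega)]

lemma reflect_invol {m i : ℕ} (hm : 0 < m) (hi : i < m) : (m - (m - i) % m) % m = i := by
  rcases Nat.eq_zero_or_pos i with h0 | h1
  · subst h0; simp [Nat.mod_self]
  · rw [Nat.mod_eq_of_lt (show m - i < m by omega), Nat.sub_sub_self (le_of_lt hi), Nat.mod_eq_of_lt hi]

lemma sum_reflect {M : Type*} [AddCommMonoid M] (F : ℕ → M) {m : ℕ} (hm : 0 < m) :
    ∑ i ∈ Finset.range m, F ((m - i) % m) = ∑ i ∈ Finset.range m, F i := by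
  refine Finset.sum_nbij' (fun i => (m - i) % m) (fun i => (m - i) % m) ?_ ?_ ?_ ?_ ?_
  · intro a ha; exact Finset.mem_range.2 (Nat.mod_lt _ hm)
  · intro a ha; exact Finset.mem_range.2 (Nat.mod_lt _ hm)
  · intro a ha; exact reflect_invol hm (Finset.mem_range.1 ha)
  · intro a ha; exact reflect_invol hm (Finset.mem_range.1 ha)
  · intro a ha; rfl

lemma notTranslatable_of_certificate (hX : IsCompact T) {m : ℕ}
    (V r : ℕ → EuclideanSpace ℝ (Fin n))
    (hsum : ∑ i ∈ Finset.range m, r i = 0)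
    (hne : ∃ i < m, r i ≠ 0)
    (hineq : ∑ i ∈ Finset.range m, suppNorm T (r i) ≤ ∑ i ∈ Finset.range m, ⟪r i, V i⟫) :
    NotTranslatableInto m V T := by
  intro t
  by_contra hcon
  push_neg at hcon
  have hmem : ∀ i < m, V i + t ∈ interior T := by
    intro i hi
    exact hcon i hi
  obtain ⟨i0, hi0m, hi0⟩ := hne
  have hstrict : ∑ i ∈ Finset.range m, ⟪r i, V i + t⟫ < ∑ i ∈ Finset.range m, suppNorm T (r i) := by
    apply Finset.sum_lt_sum
    · intro i hi
      rw [real_inner_comm]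
      exact inner_le_suppNorm hX (interior_subset (hmem i (Finset.mem_range.1 hi)))
    · exact ⟨i0, Finset.mem_range.2 hi0m, by
        rw [real_inner_comm]
        exact inner_lt_suppNorm_of_mem_interior hX (hmem i0 hi0m) hi0⟩
  have hsplit : ∑ i ∈ Finset.range m, ⟪r i, V i + t⟫
      = ∑ i ∈ Finset.range m, ⟪r i, V i⟫ + ⟪∑ i ∈ Finset.range m, r i, t⟫ := by
    rw [sum_inner]
    rw [← Finset.sum_add_distrib]
    apply Finset.sum_congr rfl
    intro i _
    rw [inner_add_right]
  rw [hsplit, hsum] at hstrict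
  simp only [inner_zero_left, add_zero] at hstrict
  linarith

lemma exists_certificate (hKc : IsCompact K) (hKconv : Convex ℝ K)
    (hK0 : (0 : EuclideanSpace ℝ (Fin n)) ∈ interior K)
    {m : ℕ} (hm : 0 < m) (q : ℕ → EuclideanSpace ℝ (Fin n))
    (hq : NotTranslatableInto m q K) {ε : ℝ} (hε0 : 0 < ε) (hε1 : ε < 1) :
    ∃ p : ℕ → EuclideanSpace ℝ (Fin n),
      (∑ i ∈ Finset.range m, p i = 0) ∧ (∃ i < m, p i ≠ 0) ∧
      (1 - ε) * ∑ i ∈ Finset.range m, suppNorm K (p i) ≤ ∑ i ∈ Finset.range m, ⟪p i, q i⟫ := by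
  classical
  have hK0' : (0 : EuclideanSpace ℝ (Fin n)) ∈ K := interior_subset hK0
  have hKne : K.Nonempty := ⟨0, hK0'⟩
  haveI : Nonempty (Fin m) := ⟨⟨0, hm⟩⟩
  set C : Fin m → Set (EuclideanSpace ℝ (Fin n)) := fun i => (fun y => (1-ε)•y - q i) '' K with hC
  set s : Set (Fin m → EuclideanSpace ℝ (Fin n)) := Set.univ.pi C with hs
  set tset : Set (Fin m → EuclideanSpace ℝ (Fin n)) := {y | ∀ i, y i = y ⟨0, hm⟩} with ht
  have hs_conv : Convex ℝ s := by
    apply convex_pi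
    rintro i - _ ⟨y1, hy1, rfl⟩ _ ⟨y2, hy2, rfl⟩ a b ha hb hab
    refine ⟨a • y1 + b • y2, hKconv hy1 hy2 ha hb hab, ?_⟩
    have hb' : b = 1 - a := by linarith
    subst hb'
    module
  have hs_cpt : IsCompact s := by
    apply isCompact_univ_pi
    intro i
    exact hKc.image ((continuous_const_smul (1-ε)).sub continuous_const)
  have ht_conv : Convex ℝ tset := by
    rintro y1 h1 y2 h2 a b ha hb hab i
    simp only [Pi.add_apply, Pi.smul_apply, h1 i, h2 i]
  have ht_closed : IsClosed tset := by
    have : tset = ⋂ i, {y : Fin m → EuclideanSpace ℝ (Fin n) | y i = y ⟨0, hm⟩} := by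
      ext y; simp [ht, Set.mem_iInter]
    rw [this]
    exact isClosed_iInter fun i => isClosed_eq (continuous_apply i) (continuous_apply _)
  have hdisj : Disjoint s tset := by
    rw [Set.disjoint_left]
    rintro y hys hyt
    obtain ⟨j, hj, hnot⟩ := hq (y ⟨0, hm⟩)
    obtain ⟨k, hk, hky⟩ := hys ⟨j, hj⟩ (Set.mem_univ _)
    apply hnot
    have h1 : y ⟨j, hj⟩ = y ⟨0, hm⟩ := hyt ⟨j, hj⟩
    have h2 : q j + y ⟨0, hm⟩ = (1-ε) • k := by
      rw [← h1, ← hky]; simp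
    rw [h2]
    have := Convex.combo_interior_closure_mem_interior hKconv hK0 (subset_closure hk)
      hε0 (by linarith : (0:ℝ) ≤ 1 - ε) (by ring)
    simpa using this
  obtain ⟨f, u, v, hfu, huv, hvf⟩ :=
    geometric_hahn_banach_compact_closed hs_conv hs_cpt ht_conv ht_closed hdisj
  set p : Fin m → EuclideanSpace ℝ (Fin n) := fun i => (InnerProductSpace.toDual ℝ (EuclideanSpace ℝ (Fin n))).symm
    (LinearMap.toContinuousLinearMap
      (f.toLinearMap.comp (LinearMap.single ℝ (fun _ : Fin m => EuclideanSpace ℝ (Fin n)) i))) with hp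
  have hfp : ∀ x : Fin m → EuclideanSpace ℝ (Fin n), f x = ∑ i, ⟪p i, x i⟫ := by
    intro x
    conv_lhs => rw [← Finset.univ_sum_single x]
    rw [map_sum]
    apply Finset.sum_congr rfl
    intro i _
    rw [hp, InnerProductSpace.toDual_symm_apply]
    simp
  have hv0 : v < 0 := by
    have h0t : (0 : Fin m → EuclideanSpace ℝ (Fin n)) ∈ tset := fun i => rfl
    have := hvf 0 h0t
    rwa [map_zero] at this
  have hsum0 : ∑ i, p i = 0 := by
    by_contra hw
    set w := ∑ i, p i with hwdef
    set c : ℝ := -((|v| + 1) / ‖w‖^2) with hc2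
    have hyc : (fun _ : Fin m => c • w) ∈ tset := fun i => rfl
    have hlt := hvf _ hyc
    rw [hfp] at hlt
    have hcalc : ∑ i, ⟪p i, c • w⟫ = c * ‖w‖^2 := by
      have : ∑ i, ⟪p i, c • w⟫ = ⟪w, c • w⟫ := by
        rw [hwdef, sum_inner]
      rw [this, real_inner_smul_right, real_inner_self_eq_norm_sq]
    rw [hcalc] at hlt
    have hwn : ‖w‖^2 ≠ 0 := by
      have : ‖w‖ ≠ 0 := norm_ne_zero_iff.2 hw
      positivity
    have : c * ‖w‖^2 = -(|v| + 1) := by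
      rw [hc2]; field_simp
    rw [this] at hlt
    have := neg_abs_le v
    linarith
  choose xx hxxK hspec using fun i : Fin m => suppNorm_exists_max hKc hKne (p i)
  have hystar : (fun i : Fin m => (1-ε) • xx i - q i) ∈ s := by
    intro i _
    exact ⟨xx i, hxxK i, rfl⟩
  have hfy := hfu _ hystar
  rw [hfp] at hfy
  have hcalc2 : ∑ i : Fin m, ⟪p i, (1-ε) • xx i - q ↑i⟫
      = (1-ε) * (∑ i : Fin m, suppNorm K (p i)) - ∑ i : Fin m, ⟪p i, q ↑i⟫ := by
    rw [Finset.mul_sum, ← Finset.sum_sub_distrib]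
    apply Finset.sum_congr rfl
    intro i _
    rw [inner_sub_right, real_inner_smul_right, (hspec i).1, real_inner_comm]
  rw [hcalc2] at hfy
  have hmain : (1-ε) * (∑ i : Fin m, suppNorm K (p i)) ≤ ∑ i : Fin m, ⟪p i, q ↑i⟫ := by
    linarith
  have hnz : ∃ i : Fin m, p i ≠ 0 := by
    by_contra hz
    push_neg at hz
    have : ∑ i : Fin m, ⟪p i, (1-ε) • xx i - q ↑i⟫ = 0 := by
      apply Finset.sum_eq_zero
      intro i _
      rw [hz i, inner_zero_left]
    rw [hcalc2] at this
    linarith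
  refine ⟨fun j => if h : j < m then p ⟨j, h⟩ else 0, ?_, ?_, ?_⟩
  · rw [← Fin.sum_univ_eq_sum_range (fun j => if h : j < m then p ⟨j, h⟩ else 0) m]
    rw [← hsum0]
    apply Finset.sum_congr rfl
    intro i _
    simp [i.isLt]
  · obtain ⟨i, hi⟩ := hnz
    exact ⟨i.1, i.isLt, by simpa [i.isLt] using hi⟩
  · have e1 : ∑ j ∈ Finset.range m, suppNorm K ((fun j => if h : j < m then p ⟨j, h⟩ else 0) j)
        = ∑ i : Fin m, suppNorm K (p i) := by
      rw [← Fin.sum_univ_eq_sum_range]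
      apply Finset.sum_congr rfl
      intro i _
      simp [i.isLt]
    have e2 : ∑ j ∈ Finset.range m, ⟪(fun j => if h : j < m then p ⟨j, h⟩ else 0) j, q j⟫
        = ∑ i : Fin m, ⟪p i, q ↑i⟫ := by
      rw [← Fin.sum_univ_eq_sum_range (fun j => ⟪if h : j < m then p ⟨j, h⟩ else 0, q j⟫) m]
      apply Finset.sum_congr rfl
      intro i _
      simp [i.isLt]
    rw [e1, e2]
    exact hmain

lemma key_step (hKc : IsCompact K) (hKconv : Convex ℝ K) (hTc : IsCompact T)
    (hK0 : (0 : EuclideanSpace ℝ (Fin n)) ∈ interior K)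
    (hT0 : (0 : EuclideanSpace ℝ (Fin n)) ∈ interior T)
    {m : ℕ} (hm : 2 ≤ m) (q : ℕ → EuclideanSpace ℝ (Fin n)) (hq : NotTranslatableInto m q K)
    {ε : ℝ} (hε0 : 0 < ε) (hε1 : ε < 1) :
    ∃ ℓ' ∈ {ℓ : ℝ | ∃ m' : ℕ, 2 ≤ m' ∧ ∃ q' : ℕ → EuclideanSpace ℝ (Fin n),
      NotTranslatableInto m' q' T ∧
      ℓ = ∑ i ∈ Finset.range m', suppNorm K (q' ((i + 1) % m') - q' i)},
      ℓ' ≤ (∑ i ∈ Finset.range m, suppNorm T (q ((i + 1) % m) - q i)) / (1 - ε) := by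
  have hm0 : 0 < m := by omega
  have hK0' : (0 : EuclideanSpace ℝ (Fin n)) ∈ K := interior_subset hK0
  have hT0' : (0 : EuclideanSpace ℝ (Fin n)) ∈ T := interior_subset hT0
  have hKne : K.Nonempty := ⟨0, hK0'⟩
  obtain ⟨P, hPsum, ⟨i0, hi0m, hi0⟩, hPineq⟩ :=
    exists_certificate hKc hKconv hK0 hm0 q hq hε0 hε1
  set g : ℕ → EuclideanSpace ℝ (Fin n) := fun k => q ((k + 1) % m) - q k with hg
  set ℓ : ℝ := ∑ i ∈ Finset.range m, suppNorm T (g i) with hl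
  set B : ℝ := ∑ i ∈ Finset.range m, suppNorm K (P i) with hB
  set A : ℝ := ∑ i ∈ Finset.range m, ⟪P i, q i⟫ with hA
  have hBpos : 0 < B := by
    apply Finset.sum_pos'
    · intro i _
      exact suppNorm_nonneg hKc hK0'
    · refine ⟨i0, Finset.mem_range.2 hi0m, ?_⟩
      have := inner_lt_suppNorm_of_mem_interior hKc hK0 hi0
      simpa using this
  have hε1' : (0:ℝ) < 1 - ε := by linarith
  have hAB : (1 - ε) * B ≤ A := hPineq
  have hApos : 0 < A := lt_of_lt_of_le (by nlinarith) hAB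
  have hgne : ∃ i < m, g i ≠ 0 := by
    by_contra h
    push_neg at h
    have hqc : ∀ i < m, q i = q 0 := by
      intro i hi
      induction i with
      | zero => rfl
      | succ k ih =>
        have hk : k < m := by omega
        have h2 := h k hk
        rw [hg] at h2
        simp only at h2
        rw [Nat.mod_eq_of_lt hi] at h2
        have h3 : q (k + 1) = q k := by
          have := sub_eq_zero.1 h2
          exact this
        rw [h3]
        exact ih hk
    obtain ⟨j, hj, hnot⟩ := hq (-(q 0))
    apply hnot
    rw [hqc j hj]
    simpa using hK0
  have hlpos : 0 < ℓ := by
    obtain ⟨i1, hi1, hgi1⟩ := hgne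
    apply Finset.sum_pos'
    · intro i _
      exact suppNorm_nonneg hTc hT0'
    · refine ⟨i1, Finset.mem_range.2 hi1, ?_⟩
      have := inner_lt_suppNorm_of_mem_interior hTc hT0 hgi1
      simpa using this
  set μ : ℝ := ℓ / A with hμ
  have hμpos : 0 < μ := div_pos hlpos hApos
  set W : ℕ → EuclideanSpace ℝ (Fin n) := fun k => -∑ j ∈ Finset.range k, P ((j + 1) % m)
    with hWdef
  have hW0 : W 0 = 0 := by simp [hWdef]
  have hshift0 : ∑ j ∈ Finset.range m, P ((j + 1) % m) = 0 := by
    rw [sum_shift P hm0]; exact hPsum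
  have hWm1 : W (m - 1) = P 0 := by
    have h2 : ∑ j ∈ Finset.range (m - 1), P ((j + 1) % m) + P ((m - 1 + 1) % m) = 0 := by
      rw [← Finset.sum_range_succ (fun j => P ((j + 1) % m)) (m - 1),
        Nat.sub_add_cancel hm0]
      exact hshift0
    rw [show m - 1 + 1 = m by omega, Nat.mod_self] at h2
    have h3 : ∑ j ∈ Finset.range (m - 1), P ((j + 1) % m) = -P 0 :=
      eq_neg_of_add_eq_zero_left h2
    rw [hWdef]
    simp only [h3, neg_neg]
  have hWstep : ∀ k < m, W k = W ((k + 1) % m) + P ((k + 1) % m) := by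
    intro k hk
    rcases eq_or_lt_of_le (Nat.succ_le_of_lt hk) with heq | hlt
    · have hk1 : k = m - 1 := by omega
      subst hk1
      rw [show m - 1 + 1 = m by omega, Nat.mod_self, hW0, hWm1, zero_add]
    · rw [Nat.mod_eq_of_lt hlt]
      have : W (k + 1) = W k - P (k + 1) := by
        rw [hWdef]
        simp only [Finset.sum_range_succ, Nat.mod_eq_of_lt hlt, neg_add]
        abel
      rw [this]
      abel
  set V : ℕ → EuclideanSpace ℝ (Fin n) := fun i => W ((m - i) % m) with hVdef
  have hVdiff : ∀ i < m, V ((i + 1) % m) - V i = P ((m - i) % m) := by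
    intro i hi
    rcases Nat.eq_zero_or_pos i with h0 | hipos
    · subst h0
      have h1m : 1 < m := by omega
      rw [hVdef]
      simp only
      rw [Nat.mod_eq_of_lt h1m, Nat.sub_zero, Nat.mod_self, hW0,
        Nat.mod_eq_of_lt (show m - 1 < m by omega), hWm1]
      simp
    · rcases eq_or_lt_of_le (Nat.succ_le_of_lt hi) with heq | hlt
      · -- i = m - 1
        have hi1 : i = m - 1 := by omega
        subst hi1
        rw [hVdef]
        simp only
        rw [show m - 1 + 1 = m by omega, Nat.mod_self, Nat.sub_zero, Nat.mod_self, hW0,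
          show m - (m - 1) = 1 by omega, Nat.mod_eq_of_lt (show 1 < m by omega)]
        have hW1 : W 1 = -P 1 := by
          rw [hWdef]
          simp only [Finset.sum_range_one, Nat.zero_add, Nat.mod_eq_of_lt (show 1 < m by omega)]
        rw [hW1]
        simp
      · -- 1 ≤ i, i + 1 < m
        rw [hVdef]
        simp only
        rw [Nat.mod_eq_of_lt hlt,
          show m - (i + 1) = m - i - 1 by omega,
          Nat.mod_eq_of_lt (show m - i - 1 < m by omega),
          Nat.mod_eq_of_lt (show m - i < m by omega)]
        have hstep := hWstep (m - i - 1) (by omega)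
        rw [show m - i - 1 + 1 = m - i by omega, Nat.mod_eq_of_lt (show m - i < m by omega)]
          at hstep
        rw [hstep]
        abel
  have hpair : ∑ k ∈ Finset.range m, ⟪g k, W k⟫ = A := by
    have e1 : ∑ k ∈ Finset.range m, ⟪g k, W k⟫
        = ∑ k ∈ Finset.range m, ⟪q ((k + 1) % m), W k⟫
          - ∑ k ∈ Finset.range m, ⟪q k, W k⟫ := by
      rw [← Finset.sum_sub_distrib]
      apply Finset.sum_congr rfl
      intro k _
      rw [hg]
      simp only
      rw [inner_sub_left]
    have e2 : ∑ k ∈ Finset.range m, ⟪q ((k + 1) % m), W k⟫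
        = ∑ k ∈ Finset.range m, (⟪q ((k + 1) % m), W ((k + 1) % m)⟫
            + ⟪q ((k + 1) % m), P ((k + 1) % m)⟫) := by
      apply Finset.sum_congr rfl
      intro k hk
      rw [hWstep k (Finset.mem_range.1 hk), inner_add_right]
    have e3 : ∑ k ∈ Finset.range m, (⟪q ((k + 1) % m), W ((k + 1) % m)⟫
            + ⟪q ((k + 1) % m), P ((k + 1) % m)⟫)
        = ∑ k ∈ Finset.range m, (⟪q k, W k⟫ + ⟪q k, P k⟫) :=
      sum_shift (fun k => ⟪q k, W k⟫ + ⟪q k, P k⟫) hm0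
    rw [e1, e2, e3, Finset.sum_add_distrib]
    have e4 : ∑ k ∈ Finset.range m, ⟪q k, P k⟫ = A := by
      rw [hA]
      apply Finset.sum_congr rfl
      intro k _
      rw [real_inner_comm]
    rw [e4]
    ring
  set Q' : ℕ → EuclideanSpace ℝ (Fin n) := fun i => μ • V i with hQ'
  set r : ℕ → EuclideanSpace ℝ (Fin n) := fun i => g ((m - i) % m) with hr
  have hsum_r : ∑ i ∈ Finset.range m, r i = 0 := by
    rw [hr]
    simp only
    rw [sum_reflect g hm0, hg]
    simp only
    rw [Finset.sum_sub_distrib, sum_shift q hm0, sub_self]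
  have hne_r : ∃ i < m, r i ≠ 0 := by
    obtain ⟨i1, hi1, hgi1⟩ := hgne
    refine ⟨(m - i1) % m, Nat.mod_lt _ hm0, ?_⟩
    rw [hr]
    simp only
    rw [reflect_invol hm0 hi1]
    exact hgi1
  have hRHS : ∑ i ∈ Finset.range m, ⟪r i, Q' i⟫ = ℓ := by
    have e1 : ∑ i ∈ Finset.range m, ⟪r i, Q' i⟫
        = μ * ∑ i ∈ Finset.range m, ⟪g ((m - i) % m), W ((m - i) % m)⟫ := by
      rw [Finset.mul_sum]
      apply Finset.sum_congr rfl
      intro i _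
      rw [hr, hQ', hVdef]
      simp only
      rw [real_inner_smul_right]
    rw [e1, sum_reflect (fun k => ⟪g k, W k⟫) hm0, hpair, hμ]
    field_simp
  have hLHS : ∑ i ∈ Finset.range m, suppNorm T (r i) = ℓ := by
    rw [hr]
    simp only
    exact sum_reflect (fun k => suppNorm T (g k)) hm0
  have hfeas : NotTranslatableInto m Q' T := by
    apply notTranslatable_of_certificate hTc Q' r hsum_r hne_r
    rw [hRHS, hLHS]
  have hℓ'val : ∑ i ∈ Finset.range m, suppNorm K (Q' ((i + 1) % m) - Q' i) = μ * B := by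
    have e1 : ∀ i ∈ Finset.range m,
        suppNorm K (Q' ((i + 1) % m) - Q' i) = μ * suppNorm K (P ((m - i) % m)) := by
      intro i hi
      rw [hQ']
      simp only
      rw [← smul_sub, suppNorm_smul hKc hKne hμpos.le, hVdiff i (Finset.mem_range.1 hi)]
    rw [Finset.sum_congr rfl e1, ← Finset.mul_sum,
      sum_reflect (fun k => suppNorm K (P k)) hm0]
  refine ⟨∑ i ∈ Finset.range m, suppNorm K (Q' ((i + 1) % m) - Q' i),
    ⟨m, hm, Q', hfeas, rfl⟩, ?_⟩
  rw [hℓ'val]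
  have hgoal : μ * B ≤ ℓ / (1 - ε) := by
    rw [hμ, div_mul_eq_mul_div, div_le_div_iff₀ hApos hε1']
    nlinarith
  exact hgoal

lemma xi_le_aux (hK : IsConvexBody K) (hT : IsConvexBody T)
    (hK0 : (0 : EuclideanSpace ℝ (Fin n)) ∈ interior K)
    (hT0 : (0 : EuclideanSpace ℝ (Fin n)) ∈ interior T) : xi K T ≤ xi T K := by
  set S1 : Set ℝ := {ℓ : ℝ | ∃ m : ℕ, 2 ≤ m ∧ ∃ q : ℕ → EuclideanSpace ℝ (Fin n),
    NotTranslatableInto m q K ∧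
    ℓ = ∑ i ∈ Finset.range m, suppNorm T (q ((i + 1) % m) - q i)} with hS1
  set S2 : Set ℝ := {ℓ : ℝ | ∃ m : ℕ, 2 ≤ m ∧ ∃ q : ℕ → EuclideanSpace ℝ (Fin n),
    NotTranslatableInto m q T ∧
    ℓ = ∑ i ∈ Finset.range m, suppNorm K (q ((i + 1) % m) - q i)} with hS2
  have hxiT : xi T K = sInf S1 := rfl
  have hxiK : xi K T = sInf S2 := rfl
  have hS2nn : ∀ ℓ ∈ S2, (0:ℝ) ≤ ℓ := by
    rintro ℓ ⟨m, hm, q, hq, rfl⟩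
    exact Finset.sum_nonneg fun i _ => suppNorm_nonneg hK.1 (interior_subset hK0)
  have hS1nn : ∀ ℓ ∈ S1, (0:ℝ) ≤ ℓ := by
    rintro ℓ ⟨m, hm, q, hq, rfl⟩
    exact Finset.sum_nonneg fun i _ => suppNorm_nonneg hT.1 (interior_subset hT0)
  have bdd2 : BddBelow S2 := ⟨0, fun ℓ hℓ => hS2nn ℓ hℓ⟩
  have hkey : ∀ ℓ ∈ S1, ∀ ε : ℝ, 0 < ε → ε < 1 → ∃ ℓ' ∈ S2, ℓ' ≤ ℓ / (1 - ε) := by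
    rintro ℓ ⟨m, hm, q, hq, rfl⟩ ε hε0 hε1
    exact key_step hK.1 hK.2.1 hT.1 hK0 hT0 hm q hq hε0 hε1
  rcases Set.eq_empty_or_nonempty S1 with h1 | h1
  · have h2 : S2 = ∅ := by
      rw [Set.eq_empty_iff_forall_notMem]
      rintro ℓ' ⟨m, hm, q, hq, rfl⟩
      obtain ⟨ℓ'', hmem, -⟩ := key_step hT.1 hT.2.1 hK.1 hT0 hK0 hm q hq
        (by norm_num : (0:ℝ) < 1/2) (by norm_num : (1:ℝ)/2 < 1)
      rw [Set.eq_empty_iff_forall_notMem] at h1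
      exact h1 _ hmem
    rw [hxiT, hxiK, h1, h2]
  · rw [hxiT, hxiK]
    apply le_csInf h1
    intro ℓ hℓ
    have hl0 : 0 ≤ ℓ := hS1nn ℓ hℓ
    have hstep : ∀ ε : ℝ, 0 < ε → ε < 1 → sInf S2 ≤ ℓ / (1 - ε) := by
      intro ε hε0 hε1
      obtain ⟨ℓ', hℓ', hle⟩ := hkey ℓ hℓ ε hε0 hε1
      exact le_trans (csInf_le bdd2 hℓ') hle
    apply le_of_forall_pos_le_add
    intro δ hδ
    rcases eq_or_lt_of_le hl0 with h0 | h0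
    · have := hstep (1/2) (by norm_num) (by norm_num)
      rw [← h0] at this ⊢
      simpa using le_trans this (by norm_num [hδ.le])
    · have hε0 : 0 < δ / (ℓ + δ) := by positivity
      have hε1 : δ / (ℓ + δ) < 1 := by
        rw [div_lt_one (by linarith)]
        linarith
      have hcalc : ℓ / (1 - δ / (ℓ + δ)) = ℓ + δ := by
        have hne : ℓ + δ ≠ 0 := by linarith
        field_simp
        rw [add_sub_cancel_right, div_self h0.ne']
      have := hstep _ hε0 hε1
      rwa [hcalc] at this


end Helpers

/-- Symmetry of the shortest billiard trajectory length: `ξ_T(K) = ξ_K(T)`. -/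
theorem xi_symm (n : ℕ) (K T : Set (EuclideanSpace ℝ (Fin n)))
    (hK : IsConvexBody K) (hT : IsConvexBody T)
    (hK0 : (0 : EuclideanSpace ℝ (Fin n)) ∈ interior K)
    (hT0 : (0 : EuclideanSpace ℝ (Fin n)) ∈ interior T) :
    xi T K = xi K T :=
  le_antisymm (xi_le_aux hT hK hT0 hK0) (xi_le_aux hK hT hK0 hT0)
end
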